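/- arXiv:2009.08222 — 2 statements merged into one kernel-verified Lean document; each statement's English description precedes it below -/
import Mathlib

section
/- Let H_m = F_m + F_{m−7} + F_{m−12} + F_{m−19} for integers m ≥ 21. Then lim_{m→∞} A(H_m)/H_m^λ = (45573/262144)·(√5/(1 + φ^{−7} + φ^{−12} + φ^{−19}))^λ. -/
open scoped BigOperators
open Filter Topology

/-- A natural number is a Fibonacci number, i.e. equals `F m` for some `m ≥ 1`
(with `F 1 = F 2 = 1`). -/
def IsFibNum (x : ℕ) : Prop := ∃ m : ℕ, 0 < m ∧ Nat.fib m = x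

/-- `R n` counts the partitions of `n` into distinct Fibonacci numbers:
the number of finite sets of Fibonacci numbers with sum `n` (so `R 0 = 1`). -/
noncomputable def R (n : ℕ) : ℕ :=
  Nat.card {S : Finset ℕ // (∀ x ∈ S, IsFibNum x) ∧ (∑ x ∈ S, x) = n}

/-- The summatory function `A H = ∑_{n=0}^{H} R n`. -/
noncomputable def A (H : ℕ) : ℕ := ∑ n ∈ Finset.range (H + 1), R n

def V (k : ℕ) : Finset ℕ := (Finset.Icc 2 k).image Nat.fib
def G (k B : ℕ) : ℕ := ((V k).powerset.filter (fun S => ∑ x ∈ S, x ≤ B)).card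
lemma mem_V {k x : ℕ} : x ∈ V k ↔ ∃ i, 2 ≤ i ∧ i ≤ k ∧ Nat.fib i = x := by
  simp [V, Finset.mem_image, Finset.mem_Icc, and_assoc]
lemma V_pos {k x : ℕ} (hx : x ∈ V k) : 0 < x := by
  obtain ⟨i, h2, -, rfl⟩ := mem_V.1 hx
  exact Nat.fib_pos.2 (by omega)
lemma fib_notin_V {k : ℕ} (hk : 3 ≤ k) : Nat.fib k ∉ V (k - 1) := by
  intro h
  obtain ⟨i, h2, hik, hfi⟩ := mem_V.1 h
  have : Nat.fib i < Nat.fib k := (Nat.fib_lt_fib h2).2 (by omega)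
  omega
lemma V_succ {k : ℕ} (hk : 3 ≤ k) : V k = insert (Nat.fib k) (V (k - 1)) := by
  ext x
  simp only [mem_V, Finset.mem_insert]
  constructor
  · rintro ⟨i, h2, hik, rfl⟩
    rcases eq_or_lt_of_le hik with rfl | hlt
    · exact Or.inl rfl
    · exact Or.inr ⟨i, h2, by omega, rfl⟩
  · rintro (rfl | ⟨i, h2, hik, rfl⟩)
    · exact ⟨k, by omega, le_rfl, rfl⟩
    · exact ⟨i, h2, by omega, rfl⟩

lemma G_step {k B : ℕ} (hk : 3 ≤ k) (hB : Nat.fib k ≤ B) :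
    G k B = G (k - 1) B + G (k - 1) (B - Nat.fib k) := by
  classical
  have hnin := fib_notin_V hk
  rw [G, V_succ hk, Finset.powerset_insert, Finset.filter_union, Finset.card_union_of_disjoint]
  · congr 1
    rw [Finset.filter_image, Finset.card_image_of_injOn]
    · rw [G]
      congr 1
      apply Finset.filter_congr
      intro S hS
      simp only [Finset.mem_powerset] at hS
      have : Nat.fib k ∉ S := fun h => hnin (hS h)
      rw [Finset.sum_insert this]
      constructor
      · intro h; omega
      · intro h; omega
    · intro S hS T hT hST
      simp only [Finset.coe_filter, Set.mem_setOf_eq, Finset.mem_powerset] at hS hT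
      have h1 : Nat.fib k ∉ S := fun h => hnin (hS.1 h)
      have h2 : Nat.fib k ∉ T := fun h => hnin (hT.1 h)
      have := congrArg (Finset.erase · (Nat.fib k)) hST
      simpa [Finset.erase_insert, h1, h2] using this
  · rw [Finset.disjoint_left]
    intro S hS1 hS2
    simp only [Finset.mem_filter, Finset.mem_image, Finset.mem_powerset] at hS1 hS2
    obtain ⟨⟨T, hT, rfl⟩, -⟩ := hS2
    exact hnin (hS1.1 (Finset.mem_insert_self _ _))

lemma card_V (k : ℕ) (hk : 2 ≤ k) : (V k).card = k - 1 := by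
  rw [V, Finset.card_image_of_injOn, Nat.card_Icc]
  · omega
  intro a ha b hb hab
  simp only [Finset.coe_Icc, Set.mem_Icc] at ha hb
  by_contra hne
  rcases Nat.lt_or_ge a b with h | h
  · have h1 : Nat.fib a < Nat.fib b := (Nat.fib_lt_fib ha.1).mpr h
    omega
  · have h1 : Nat.fib b < Nat.fib a := (Nat.fib_lt_fib hb.1).mpr (by omega)
    omega

lemma sum_V (k : ℕ) (hk : 2 ≤ k) : ∑ x ∈ V k, x = Nat.fib (k + 2) - 2 := by
  induction k with
  | zero => omega
  | succ n ih =>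
    rcases Nat.lt_or_ge n 2 with h | h
    · interval_cases n
      · omega
      · show ∑ x ∈ (Finset.Icc 2 2).image Nat.fib, x = _
        decide
    · have h3 : 3 ≤ n + 1 := by omega
      have hV : V (n+1) = insert (Nat.fib (n+1)) (V n) := by
        have := V_succ h3; simpa using this
      rw [hV, Finset.sum_insert (by simpa using fib_notin_V h3), ih h]
      have h1 : 2 ≤ Nat.fib (n + 2) := by
        have : Nat.fib 3 ≤ Nat.fib (n + 2) := Nat.fib_mono (by omega)
        simpa [Nat.fib] using this
      have h2 : Nat.fib (n + 1 + 2) = Nat.fib (n + 1) + Nat.fib (n + 2) :=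
        Nat.fib_add_two
      omega

lemma G_full {k B : ℕ} (hk : 2 ≤ k) (hB : Nat.fib (k + 2) - 2 ≤ B) : G k B = 2 ^ (k - 1) := by
  rw [G, Finset.filter_true_of_mem, Finset.card_powerset, card_V k hk]
  intro S hS
  simp only [Finset.mem_powerset] at hS
  calc ∑ x ∈ S, x ≤ ∑ x ∈ V k, x := Finset.sum_le_sum_of_subset hS
    _ ≤ B := by rw [sum_V k hk]; exact hB

lemma G_zero (k : ℕ) : G k 0 = 1 := by
  rw [G]
  have : (V k).powerset.filter (fun S => ∑ x ∈ S, x ≤ 0) = {∅} := by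
    ext S
    simp only [Finset.mem_filter, Finset.mem_powerset, Finset.mem_singleton]
    constructor
    · rintro ⟨hsub, hsum⟩
      by_contra hne
      obtain ⟨x, hx⟩ := Finset.nonempty_iff_ne_empty.2 hne
      have : 0 < x := V_pos (hsub hx)
      have : x ≤ ∑ y ∈ S, y := Finset.single_le_sum (fun i _ => Nat.zero_le i) hx
      omega
    · rintro rfl; simp
  rw [this, Finset.card_singleton]

lemma G_drop {k B : ℕ} (s : ℕ) (hB : B < Nat.fib (k + 1)) :
    G (k + s) B = G k B := by
  rw [G, G]
  congr 1
  ext S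
  simp only [Finset.mem_filter, Finset.mem_powerset]
  constructor
  · rintro ⟨hsub, hsum⟩
    refine ⟨fun x hx => ?_, hsum⟩
    obtain ⟨i, h2, hik, rfl⟩ := mem_V.1 (hsub hx)
    have hxB : Nat.fib i ≤ B := le_trans (Finset.single_le_sum (fun i _ => Nat.zero_le i) hx) hsum
    refine mem_V.2 ⟨i, h2, ?_, rfl⟩
    by_contra hgt
    have : Nat.fib (k + 1) ≤ Nat.fib i := Nat.fib_mono (by omega)
    omega
  · rintro ⟨hsub, hsum⟩
    refine ⟨fun x hx => ?_, hsum⟩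
    obtain ⟨i, h2, hik, rfl⟩ := mem_V.1 (hsub hx)
    exact mem_V.2 ⟨i, h2, by omega, rfl⟩

lemma R_eq {n k : ℕ} (hk : 2 ≤ k) (hn : n < Nat.fib (k + 1)) :
    R n = ((V k).powerset.filter (fun S => ∑ x ∈ S, x = n)).card := by
  rw [R]
  have he : ∀ S : Finset ℕ,
      ((∀ x ∈ S, IsFibNum x) ∧ (∑ x ∈ S, x) = n) ↔
        S ∈ (V k).powerset.filter (fun S => ∑ x ∈ S, x = n) := by
    intro S
    simp only [Finset.mem_filter, Finset.mem_powerset]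
    constructor
    · rintro ⟨hfib, rfl⟩
      refine ⟨fun x hx => ?_, rfl⟩
      obtain ⟨m, hm, rfl⟩ := hfib x hx
      have hxs : Nat.fib m ≤ ∑ x ∈ S, x :=
        Finset.single_le_sum (fun i _ => Nat.zero_le i) hx
      rcases Nat.lt_or_ge m 2 with h | h
      · interval_cases m
        · refine mem_V.2 ⟨2, le_rfl, hk, rfl⟩
      · refine mem_V.2 ⟨m, h, ?_, rfl⟩
        by_contra hgt
        have : Nat.fib (k + 1) ≤ Nat.fib m := Nat.fib_mono (by omega)
        omega
    · rintro ⟨hsub, rfl⟩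
      refine ⟨fun x hx => ?_, rfl⟩
      obtain ⟨i, h2, hik, rfl⟩ := mem_V.1 (hsub hx)
      exact ⟨i, by omega, rfl⟩
  rw [Nat.card_congr (Equiv.subtypeEquivRight he), Nat.card_eq_fintype_card,
    Fintype.card_coe]

lemma A_eq_G {H k : ℕ} (hk : 2 ≤ k) (hH : H < Nat.fib (k + 1)) : A H = G k H := by
  rw [A, G]
  rw [Finset.card_eq_sum_card_fiberwise
    (f := fun S => ∑ x ∈ S, x) (t := Finset.range (H + 1)) ?_]
  · apply Finset.sum_congr rfl
    intro n hn
    simp only [Finset.mem_range] at hn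
    rw [R_eq hk (by omega)]
    congr 1
    rw [Finset.filter_filter]
    apply Finset.filter_congr
    intro S hS
    constructor
    · intro h; exact ⟨by omega, h⟩
    · rintro ⟨-, hb⟩; exact hb
  · intro S hS
    simp only [Finset.mem_coe, Finset.mem_filter] at hS
    simp only [Finset.mem_coe, Finset.mem_range]
    omega

lemma fib_split (j t : ℕ) : Nat.fib (j + t + 2) = Nat.fib (j + t) + Nat.fib (j + t + 1) := Nat.fib_add_two

lemma Qmain : ∀ n : ℕ,
    (∀ j : ℕ, n = j + 2 → (1572864 : ℤ) * ((G (j + 2) (Nat.fib (j + 2)) : ℕ) : ℤ) = 1048576 * 2 ^ j + 786432 * (j : ℤ) + 1966080 + (131072) * (-1) ^ j) ∧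
    (∀ j : ℕ, n = j + 3 → (1572864 : ℤ) * ((G (j + 3) (Nat.fib (j + 3) + Nat.fib (j + 2)) : ℕ) : ℤ) = 4194304 * 2 ^ j + 786432 * (j : ℤ) + 1966080 + (131072) * (-1) ^ j) ∧
    (∀ j : ℕ, n = j + 4 → (1572864 : ℤ) * ((G (j + 4) (Nat.fib (j + 4) + Nat.fib (j + 3) + Nat.fib (j + 2)) : ℕ) : ℤ) = 10485760 * 2 ^ j + 786432 * (j : ℤ) + 1966080 + (131072) * (-1) ^ j) ∧
    (∀ j : ℕ, n = j + 16 → (1572864 : ℤ) * ((G (j + 16) (Nat.fib (j + 16) + Nat.fib (j + 15) + Nat.fib (j + 14) + Nat.fib (j + 9) + Nat.fib (j + 2)) : ℕ) : ℤ) = 43502272512 * 2 ^ j + 9437184 * (j : ℤ) + 23592960 + (1572864) * (-1) ^ j) ∧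
    (∀ j : ℕ, n = j + 11 → (1572864 : ℤ) * ((G (j + 11) (Nat.fib (j + 11) + Nat.fib (j + 10) + Nat.fib (j + 9) + Nat.fib (j + 2)) : ℕ) : ℤ) = 1347420160 * 2 ^ j + 3145728 * (j : ℤ) + 7864320 + (524288) * (-1) ^ j) ∧
    (∀ j : ℕ, n = j + 6 → (1572864 : ℤ) * ((G (j + 6) (Nat.fib (j + 6) + Nat.fib (j + 5) + Nat.fib (j + 2)) : ℕ) : ℤ) = 36700160 * 2 ^ j + 1572864 * (j : ℤ) + 3932160 + (262144) * (-1) ^ j) ∧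
    (∀ j : ℕ, n = j + 18 → (1572864 : ℤ) * ((G (j + 18) (Nat.fib (j + 18) + Nat.fib (j + 17) + Nat.fib (j + 14) + Nat.fib (j + 9) + Nat.fib (j + 2)) : ℕ) : ℤ) = 151429054464 * 2 ^ j + 18874368 * (j : ℤ) + 47185920 + (3145728) * (-1) ^ j) ∧
    (∀ j : ℕ, n = j + 13 → (1572864 : ℤ) * ((G (j + 13) (Nat.fib (j + 13) + Nat.fib (j + 12) + Nat.fib (j + 9) + Nat.fib (j + 2)) : ℕ) : ℤ) = 4708106240 * 2 ^ j + 6291456 * (j : ℤ) + 15728640 + (1048576) * (-1) ^ j) ∧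
    (∀ j : ℕ, n = j + 8 → (1572864 : ℤ) * ((G (j + 8) (Nat.fib (j + 8) + Nat.fib (j + 7) + Nat.fib (j + 2)) : ℕ) : ℤ) = 138412032 * 2 ^ j + 2359296 * (j : ℤ) + 5898240 + (393216) * (-1) ^ j) ∧
    (∀ j : ℕ, n = j + 20 → (1572864 : ℤ) * ((G (j + 20) (Nat.fib (j + 20) + Nat.fib (j + 19) + Nat.fib (j + 14) + Nat.fib (j + 9) + Nat.fib (j + 2)) : ℕ) : ℤ) = 568593481728 * 2 ^ j + 28311552 * (j : ℤ) + 70778880 + (4718592) * (-1) ^ j) ∧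
    (∀ j : ℕ, n = j + 15 → (1572864 : ℤ) * ((G (j + 15) (Nat.fib (j + 15) + Nat.fib (j + 14) + Nat.fib (j + 9) + Nat.fib (j + 2)) : ℕ) : ℤ) = 17732468736 * 2 ^ j + 9437184 * (j : ℤ) + 23592960 + (1572864) * (-1) ^ j) ∧
    (∀ j : ℕ, n = j + 10 → (1572864 : ℤ) * ((G (j + 10) (Nat.fib (j + 10) + Nat.fib (j + 9) + Nat.fib (j + 2)) : ℕ) : ℤ) = 542113792 * 2 ^ j + 3145728 * (j : ℤ) + 7864320 + (524288) * (-1) ^ j) ∧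
    (∀ j : ℕ, n = j + 5 → (1572864 : ℤ) * ((G (j + 5) (Nat.fib (j + 5) + Nat.fib (j + 2)) : ℕ) : ℤ) = 11534336 * 2 ^ j + 1572864 * (j : ℤ) + 3932160 + (262144) * (-1) ^ j) ∧
    (∀ j : ℕ, n = j + 17 → (1572864 : ℤ) * ((G (j + 17) (Nat.fib (j + 17) + Nat.fib (j + 14) + Nat.fib (j + 9) + Nat.fib (j + 2)) : ℕ) : ℤ) = 48349839360 * 2 ^ j + 18874368 * (j : ℤ) + 47185920 + (3145728) * (-1) ^ j) ∧
    (∀ j : ℕ, n = j + 12 → (1572864 : ℤ) * ((G (j + 12) (Nat.fib (j + 12) + Nat.fib (j + 9) + Nat.fib (j + 2)) : ℕ) : ℤ) = 1486880768 * 2 ^ j + 6291456 * (j : ℤ) + 15728640 + (1048576) * (-1) ^ j) ∧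
    (∀ j : ℕ, n = j + 7 → (1572864 : ℤ) * ((G (j + 7) (Nat.fib (j + 7) + Nat.fib (j + 2)) : ℕ) : ℤ) = 37748736 * 2 ^ j + 2359296 * (j : ℤ) + 5898240 + (393216) * (-1) ^ j) ∧
    (∀ j : ℕ, n = j + 19 → (1572864 : ℤ) * ((G (j + 19) (Nat.fib (j + 19) + Nat.fib (j + 14) + Nat.fib (j + 9) + Nat.fib (j + 2)) : ℕ) : ℤ) = 156276621312 * 2 ^ j + 28311552 * (j : ℤ) + 70778880 + (4718592) * (-1) ^ j) ∧
    (∀ j : ℕ, n = j + 14 → (1572864 : ℤ) * ((G (j + 14) (Nat.fib (j + 14) + Nat.fib (j + 9) + Nat.fib (j + 2)) : ℕ) : ℤ) = 4847566848 * 2 ^ j + 9437184 * (j : ℤ) + 23592960 + (1572864) * (-1) ^ j) ∧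
    (∀ j : ℕ, n = j + 9 → (1572864 : ℤ) * ((G (j + 9) (Nat.fib (j + 9) + Nat.fib (j + 2)) : ℕ) : ℤ) = 139460608 * 2 ^ j + 3145728 * (j : ℤ) + 7864320 + (524288) * (-1) ^ j) ∧
    (∀ j : ℕ, n = j + 21 → (1572864 : ℤ) * ((G (j + 21) (Nat.fib (j + 21) + Nat.fib (j + 14) + Nat.fib (j + 9) + Nat.fib (j + 2)) : ℕ) : ℤ) = 573441048576 * 2 ^ j + 37748736 * (j : ℤ) + 94371840 + (6291456) * (-1) ^ j) := by
  intro n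
  induction n using Nat.strong_induction_on with
  | _ n IH =>
  refine ⟨?_, ?_, ?_, ?_, ?_, ?_, ?_, ?_, ?_, ?_, ?_, ?_, ?_, ?_, ?_, ?_, ?_, ?_, ?_, ?_⟩
  -- pattern (0,)
  · intro j hn
    rcases Nat.lt_or_ge j 2 with hj | hj
    · interval_cases j
      · subst hn; norm_num [show Nat.fib 2 = 1 from rfl, show G 2 1 = 2 from by decide]
      · subst hn; norm_num [show Nat.fib 3 = 2 from rfl, show G 3 2 = 3 from by decide]
    · obtain ⟨j, rfl⟩ : ∃ j', j = j' + 2 := ⟨j - 2, by omega⟩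
      subst hn
      rw [show j + 2 + 2 = j + 4 from by omega]
      have h0 : Nat.fib (j+2) = Nat.fib j + Nat.fib (j+1) := fib_split j 0
      have h1 : Nat.fib (j+3) = Nat.fib (j+1) + Nat.fib (j+2) := fib_split j 1
      have h2 : Nat.fib (j+4) = Nat.fib (j+2) + Nat.fib (j+3) := fib_split j 2
      have hpos : 0 < Nat.fib (j+1) := Nat.fib_pos.mpr (by omega)
      have hstep := G_step (k := j + 4) (B := Nat.fib (j + 4)) (by omega) (by omega)
      have hi1 : j + 4 - 1 = j + 3 := by omega
      have hsub : Nat.fib (j + 4) - Nat.fib (j + 4) = 0 := by omega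
      rw [hi1, hsub, G_zero] at hstep
      have ih1 := (IH (j + 3) (by omega)).2.1 j rfl
      have hcast : ((G (j + 3) (Nat.fib (j + 4)) : ℕ) : ℤ) = ((G (j + 3) (Nat.fib (j + 3) + Nat.fib (j + 2)) : ℕ) : ℤ) := by
        rw [show Nat.fib (j + 4) = Nat.fib (j + 3) + Nat.fib (j + 2) from by omega]
      rw [hstep]
      push_cast
      linear_combination (1572864 : ℤ) * hcast + ih1
  -- pattern (0, 1)
  · intro j hn
    subst hn
    have h0 : Nat.fib (j+2) = Nat.fib j + Nat.fib (j+1) := fib_split j 0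
    have h1 : Nat.fib (j+3) = Nat.fib (j+1) + Nat.fib (j+2) := fib_split j 1
    have h2 : Nat.fib (j+4) = Nat.fib (j+2) + Nat.fib (j+3) := fib_split j 2
    have hpos : 0 < Nat.fib (j+1) := Nat.fib_pos.mpr (by omega)
    have hstep := G_step (k := j + 3) (B := Nat.fib (j + 3) + Nat.fib (j + 2)) (by omega) (by omega)
    have hi1 : j + 3 - 1 = j + 2 := by omega
    have hsub : Nat.fib (j + 3) + Nat.fib (j + 2) - Nat.fib (j + 3) = Nat.fib (j + 2) := by omega
    rw [hi1, hsub] at hstep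
    have ih2 := (IH (j + 2) (by omega)).1 j rfl
    have hsat := G_full (k := j + 2) (B := Nat.fib (j + 3) + Nat.fib (j + 2)) (by omega) (by have hx1 : Nat.fib (j + 2 + 2) = Nat.fib (j + 4) := congrArg Nat.fib (by omega); omega)
    have hi2 : j + 2 - 1 = j + 1 := by omega
    rw [hi2] at hsat
    rw [hsat] at hstep
    rw [hstep]
    push_cast
    linear_combination ih2
  -- pattern (0, 1, 2)
  · intro j hn
    subst hn
    have h0 : Nat.fib (j+2) = Nat.fib j + Nat.fib (j+1) := fib_split j 0
    have h1 : Nat.fib (j+3) = Nat.fib (j+1) + Nat.fib (j+2) := fib_split j 1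
    have h2 : Nat.fib (j+4) = Nat.fib (j+2) + Nat.fib (j+3) := fib_split j 2
    have h3 : Nat.fib (j+5) = Nat.fib (j+3) + Nat.fib (j+4) := fib_split j 3
    have hpos : 0 < Nat.fib (j+1) := Nat.fib_pos.mpr (by omega)
    have hstep := G_step (k := j + 4) (B := Nat.fib (j + 4) + Nat.fib (j + 3) + Nat.fib (j + 2)) (by omega) (by omega)
    have hi1 : j + 4 - 1 = j + 3 := by omega
    have hsub : Nat.fib (j + 4) + Nat.fib (j + 3) + Nat.fib (j + 2) - Nat.fib (j + 4) = Nat.fib (j + 3) + Nat.fib (j + 2) := by omega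
    rw [hi1, hsub] at hstep
    have ih2 := (IH (j + 3) (by omega)).2.1 j rfl
    have hsat := G_full (k := j + 3) (B := Nat.fib (j + 4) + Nat.fib (j + 3) + Nat.fib (j + 2)) (by omega) (by have hx1 : Nat.fib (j + 3 + 2) = Nat.fib (j + 5) := congrArg Nat.fib (by omega); omega)
    have hi2 : j + 3 - 1 = j + 2 := by omega
    rw [hi2] at hsat
    rw [hsat] at hstep
    rw [hstep]
    push_cast
    linear_combination ih2
  -- pattern (0, 1, 2, 7, 14)
  · intro j hn
    subst hn
    have h0 : Nat.fib (j+2) = Nat.fib j + Nat.fib (j+1) := fib_split j 0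
    have h1 : Nat.fib (j+3) = Nat.fib (j+1) + Nat.fib (j+2) := fib_split j 1
    have h2 : Nat.fib (j+4) = Nat.fib (j+2) + Nat.fib (j+3) := fib_split j 2
    have h3 : Nat.fib (j+5) = Nat.fib (j+3) + Nat.fib (j+4) := fib_split j 3
    have h4 : Nat.fib (j+6) = Nat.fib (j+4) + Nat.fib (j+5) := fib_split j 4
    have h5 : Nat.fib (j+7) = Nat.fib (j+5) + Nat.fib (j+6) := fib_split j 5
    have h6 : Nat.fib (j+8) = Nat.fib (j+6) + Nat.fib (j+7) := fib_split j 6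
    have h7 : Nat.fib (j+9) = Nat.fib (j+7) + Nat.fib (j+8) := fib_split j 7
    have h8 : Nat.fib (j+10) = Nat.fib (j+8) + Nat.fib (j+9) := fib_split j 8
    have h9 : Nat.fib (j+11) = Nat.fib (j+9) + Nat.fib (j+10) := fib_split j 9
    have h10 : Nat.fib (j+12) = Nat.fib (j+10) + Nat.fib (j+11) := fib_split j 10
    have h11 : Nat.fib (j+13) = Nat.fib (j+11) + Nat.fib (j+12) := fib_split j 11
    have h12 : Nat.fib (j+14) = Nat.fib (j+12) + Nat.fib (j+13) := fib_split j 12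
    have h13 : Nat.fib (j+15) = Nat.fib (j+13) + Nat.fib (j+14) := fib_split j 13
    have h14 : Nat.fib (j+16) = Nat.fib (j+14) + Nat.fib (j+15) := fib_split j 14
    have h15 : Nat.fib (j+17) = Nat.fib (j+15) + Nat.fib (j+16) := fib_split j 15
    have hpos : 0 < Nat.fib (j+1) := Nat.fib_pos.mpr (by omega)
    have hstep := G_step (k := j + 16) (B := Nat.fib (j + 16) + Nat.fib (j + 15) + Nat.fib (j + 14) + Nat.fib (j + 9) + Nat.fib (j + 2)) (by omega) (by omega)
    have hi1 : j + 16 - 1 = j + 15 := by omega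
    have hsub : Nat.fib (j + 16) + Nat.fib (j + 15) + Nat.fib (j + 14) + Nat.fib (j + 9) + Nat.fib (j + 2) - Nat.fib (j + 16) = Nat.fib (j + 15) + Nat.fib (j + 14) + Nat.fib (j + 9) + Nat.fib (j + 2) := by omega
    rw [hi1, hsub] at hstep
    have ih2 := (IH (j + 15) (by omega)).2.2.2.2.2.2.2.2.2.2.1 j rfl
    have hsat := G_full (k := j + 15) (B := Nat.fib (j + 16) + Nat.fib (j + 15) + Nat.fib (j + 14) + Nat.fib (j + 9) + Nat.fib (j + 2)) (by omega) (by have hx1 : Nat.fib (j + 15 + 2) = Nat.fib (j + 17) := congrArg Nat.fib (by omega); omega)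
    have hi2 : j + 15 - 1 = j + 14 := by omega
    rw [hi2] at hsat
    rw [hsat] at hstep
    rw [hstep]
    push_cast
    linear_combination ih2
  -- pattern (0, 1, 2, 9)
  · intro j hn
    subst hn
    have h0 : Nat.fib (j+2) = Nat.fib j + Nat.fib (j+1) := fib_split j 0
    have h1 : Nat.fib (j+3) = Nat.fib (j+1) + Nat.fib (j+2) := fib_split j 1
    have h2 : Nat.fib (j+4) = Nat.fib (j+2) + Nat.fib (j+3) := fib_split j 2
    have h3 : Nat.fib (j+5) = Nat.fib (j+3) + Nat.fib (j+4) := fib_split j 3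
    have h4 : Nat.fib (j+6) = Nat.fib (j+4) + Nat.fib (j+5) := fib_split j 4
    have h5 : Nat.fib (j+7) = Nat.fib (j+5) + Nat.fib (j+6) := fib_split j 5
    have h6 : Nat.fib (j+8) = Nat.fib (j+6) + Nat.fib (j+7) := fib_split j 6
    have h7 : Nat.fib (j+9) = Nat.fib (j+7) + Nat.fib (j+8) := fib_split j 7
    have h8 : Nat.fib (j+10) = Nat.fib (j+8) + Nat.fib (j+9) := fib_split j 8
    have h9 : Nat.fib (j+11) = Nat.fib (j+9) + Nat.fib (j+10) := fib_split j 9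
    have h10 : Nat.fib (j+12) = Nat.fib (j+10) + Nat.fib (j+11) := fib_split j 10
    have hpos : 0 < Nat.fib (j+1) := Nat.fib_pos.mpr (by omega)
    have hstep := G_step (k := j + 11) (B := Nat.fib (j + 11) + Nat.fib (j + 10) + Nat.fib (j + 9) + Nat.fib (j + 2)) (by omega) (by omega)
    have hi1 : j + 11 - 1 = j + 10 := by omega
    have hsub : Nat.fib (j + 11) + Nat.fib (j + 10) + Nat.fib (j + 9) + Nat.fib (j + 2) - Nat.fib (j + 11) = Nat.fib (j + 10) + Nat.fib (j + 9) + Nat.fib (j + 2) := by omega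
    rw [hi1, hsub] at hstep
    have ih2 := (IH (j + 10) (by omega)).2.2.2.2.2.2.2.2.2.2.2.1 j rfl
    have hsat := G_full (k := j + 10) (B := Nat.fib (j + 11) + Nat.fib (j + 10) + Nat.fib (j + 9) + Nat.fib (j + 2)) (by omega) (by have hx1 : Nat.fib (j + 10 + 2) = Nat.fib (j + 12) := congrArg Nat.fib (by omega); omega)
    have hi2 : j + 10 - 1 = j + 9 := by omega
    rw [hi2] at hsat
    rw [hsat] at hstep
    rw [hstep]
    push_cast
    linear_combination ih2
  -- pattern (0, 1, 4)
  · intro j hn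
    subst hn
    have h0 : Nat.fib (j+2) = Nat.fib j + Nat.fib (j+1) := fib_split j 0
    have h1 : Nat.fib (j+3) = Nat.fib (j+1) + Nat.fib (j+2) := fib_split j 1
    have h2 : Nat.fib (j+4) = Nat.fib (j+2) + Nat.fib (j+3) := fib_split j 2
    have h3 : Nat.fib (j+5) = Nat.fib (j+3) + Nat.fib (j+4) := fib_split j 3
    have h4 : Nat.fib (j+6) = Nat.fib (j+4) + Nat.fib (j+5) := fib_split j 4
    have h5 : Nat.fib (j+7) = Nat.fib (j+5) + Nat.fib (j+6) := fib_split j 5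
    have hpos : 0 < Nat.fib (j+1) := Nat.fib_pos.mpr (by omega)
    have hstep := G_step (k := j + 6) (B := Nat.fib (j + 6) + Nat.fib (j + 5) + Nat.fib (j + 2)) (by omega) (by omega)
    have hi1 : j + 6 - 1 = j + 5 := by omega
    have hsub : Nat.fib (j + 6) + Nat.fib (j + 5) + Nat.fib (j + 2) - Nat.fib (j + 6) = Nat.fib (j + 5) + Nat.fib (j + 2) := by omega
    rw [hi1, hsub] at hstep
    have ih2 := (IH (j + 5) (by omega)).2.2.2.2.2.2.2.2.2.2.2.2.1 j rfl
    have hsat := G_full (k := j + 5) (B := Nat.fib (j + 6) + Nat.fib (j + 5) + Nat.fib (j + 2)) (by omega) (by have hx1 : Nat.fib (j + 5 + 2) = Nat.fib (j + 7) := congrArg Nat.fib (by omega); omega)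
    have hi2 : j + 5 - 1 = j + 4 := by omega
    rw [hi2] at hsat
    rw [hsat] at hstep
    rw [hstep]
    push_cast
    linear_combination ih2
  -- pattern (0, 1, 4, 9, 16)
  · intro j hn
    subst hn
    have h0 : Nat.fib (j+2) = Nat.fib j + Nat.fib (j+1) := fib_split j 0
    have h1 : Nat.fib (j+3) = Nat.fib (j+1) + Nat.fib (j+2) := fib_split j 1
    have h2 : Nat.fib (j+4) = Nat.fib (j+2) + Nat.fib (j+3) := fib_split j 2
    have h3 : Nat.fib (j+5) = Nat.fib (j+3) + Nat.fib (j+4) := fib_split j 3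
    have h4 : Nat.fib (j+6) = Nat.fib (j+4) + Nat.fib (j+5) := fib_split j 4
    have h5 : Nat.fib (j+7) = Nat.fib (j+5) + Nat.fib (j+6) := fib_split j 5
    have h6 : Nat.fib (j+8) = Nat.fib (j+6) + Nat.fib (j+7) := fib_split j 6
    have h7 : Nat.fib (j+9) = Nat.fib (j+7) + Nat.fib (j+8) := fib_split j 7
    have h8 : Nat.fib (j+10) = Nat.fib (j+8) + Nat.fib (j+9) := fib_split j 8
    have h9 : Nat.fib (j+11) = Nat.fib (j+9) + Nat.fib (j+10) := fib_split j 9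
    have h10 : Nat.fib (j+12) = Nat.fib (j+10) + Nat.fib (j+11) := fib_split j 10
    have h11 : Nat.fib (j+13) = Nat.fib (j+11) + Nat.fib (j+12) := fib_split j 11
    have h12 : Nat.fib (j+14) = Nat.fib (j+12) + Nat.fib (j+13) := fib_split j 12
    have h13 : Nat.fib (j+15) = Nat.fib (j+13) + Nat.fib (j+14) := fib_split j 13
    have h14 : Nat.fib (j+16) = Nat.fib (j+14) + Nat.fib (j+15) := fib_split j 14
    have h15 : Nat.fib (j+17) = Nat.fib (j+15) + Nat.fib (j+16) := fib_split j 15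
    have h16 : Nat.fib (j+18) = Nat.fib (j+16) + Nat.fib (j+17) := fib_split j 16
    have h17 : Nat.fib (j+19) = Nat.fib (j+17) + Nat.fib (j+18) := fib_split j 17
    have hpos : 0 < Nat.fib (j+1) := Nat.fib_pos.mpr (by omega)
    have hstep := G_step (k := j + 18) (B := Nat.fib (j + 18) + Nat.fib (j + 17) + Nat.fib (j + 14) + Nat.fib (j + 9) + Nat.fib (j + 2)) (by omega) (by omega)
    have hi1 : j + 18 - 1 = j + 17 := by omega
    have hsub : Nat.fib (j + 18) + Nat.fib (j + 17) + Nat.fib (j + 14) + Nat.fib (j + 9) + Nat.fib (j + 2) - Nat.fib (j + 18) = Nat.fib (j + 17) + Nat.fib (j + 14) + Nat.fib (j + 9) + Nat.fib (j + 2) := by omega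
    rw [hi1, hsub] at hstep
    have ih2 := (IH (j + 17) (by omega)).2.2.2.2.2.2.2.2.2.2.2.2.2.1 j rfl
    have hsat := G_full (k := j + 17) (B := Nat.fib (j + 18) + Nat.fib (j + 17) + Nat.fib (j + 14) + Nat.fib (j + 9) + Nat.fib (j + 2)) (by omega) (by have hx1 : Nat.fib (j + 17 + 2) = Nat.fib (j + 19) := congrArg Nat.fib (by omega); omega)
    have hi2 : j + 17 - 1 = j + 16 := by omega
    rw [hi2] at hsat
    rw [hsat] at hstep
    rw [hstep]
    push_cast
    linear_combination ih2
  -- pattern (0, 1, 4, 11)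
  · intro j hn
    subst hn
    have h0 : Nat.fib (j+2) = Nat.fib j + Nat.fib (j+1) := fib_split j 0
    have h1 : Nat.fib (j+3) = Nat.fib (j+1) + Nat.fib (j+2) := fib_split j 1
    have h2 : Nat.fib (j+4) = Nat.fib (j+2) + Nat.fib (j+3) := fib_split j 2
    have h3 : Nat.fib (j+5) = Nat.fib (j+3) + Nat.fib (j+4) := fib_split j 3
    have h4 : Nat.fib (j+6) = Nat.fib (j+4) + Nat.fib (j+5) := fib_split j 4
    have h5 : Nat.fib (j+7) = Nat.fib (j+5) + Nat.fib (j+6) := fib_split j 5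
    have h6 : Nat.fib (j+8) = Nat.fib (j+6) + Nat.fib (j+7) := fib_split j 6
    have h7 : Nat.fib (j+9) = Nat.fib (j+7) + Nat.fib (j+8) := fib_split j 7
    have h8 : Nat.fib (j+10) = Nat.fib (j+8) + Nat.fib (j+9) := fib_split j 8
    have h9 : Nat.fib (j+11) = Nat.fib (j+9) + Nat.fib (j+10) := fib_split j 9
    have h10 : Nat.fib (j+12) = Nat.fib (j+10) + Nat.fib (j+11) := fib_split j 10
    have h11 : Nat.fib (j+13) = Nat.fib (j+11) + Nat.fib (j+12) := fib_split j 11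
    have h12 : Nat.fib (j+14) = Nat.fib (j+12) + Nat.fib (j+13) := fib_split j 12
    have hpos : 0 < Nat.fib (j+1) := Nat.fib_pos.mpr (by omega)
    have hstep := G_step (k := j + 13) (B := Nat.fib (j + 13) + Nat.fib (j + 12) + Nat.fib (j + 9) + Nat.fib (j + 2)) (by omega) (by omega)
    have hi1 : j + 13 - 1 = j + 12 := by omega
    have hsub : Nat.fib (j + 13) + Nat.fib (j + 12) + Nat.fib (j + 9) + Nat.fib (j + 2) - Nat.fib (j + 13) = Nat.fib (j + 12) + Nat.fib (j + 9) + Nat.fib (j + 2) := by omega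
    rw [hi1, hsub] at hstep
    have ih2 := (IH (j + 12) (by omega)).2.2.2.2.2.2.2.2.2.2.2.2.2.2.1 j rfl
    have hsat := G_full (k := j + 12) (B := Nat.fib (j + 13) + Nat.fib (j + 12) + Nat.fib (j + 9) + Nat.fib (j + 2)) (by omega) (by have hx1 : Nat.fib (j + 12 + 2) = Nat.fib (j + 14) := congrArg Nat.fib (by omega); omega)
    have hi2 : j + 12 - 1 = j + 11 := by omega
    rw [hi2] at hsat
    rw [hsat] at hstep
    rw [hstep]
    push_cast
    linear_combination ih2
  -- pattern (0, 1, 6)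
  · intro j hn
    subst hn
    have h0 : Nat.fib (j+2) = Nat.fib j + Nat.fib (j+1) := fib_split j 0
    have h1 : Nat.fib (j+3) = Nat.fib (j+1) + Nat.fib (j+2) := fib_split j 1
    have h2 : Nat.fib (j+4) = Nat.fib (j+2) + Nat.fib (j+3) := fib_split j 2
    have h3 : Nat.fib (j+5) = Nat.fib (j+3) + Nat.fib (j+4) := fib_split j 3
    have h4 : Nat.fib (j+6) = Nat.fib (j+4) + Nat.fib (j+5) := fib_split j 4
    have h5 : Nat.fib (j+7) = Nat.fib (j+5) + Nat.fib (j+6) := fib_split j 5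
    have h6 : Nat.fib (j+8) = Nat.fib (j+6) + Nat.fib (j+7) := fib_split j 6
    have h7 : Nat.fib (j+9) = Nat.fib (j+7) + Nat.fib (j+8) := fib_split j 7
    have hpos : 0 < Nat.fib (j+1) := Nat.fib_pos.mpr (by omega)
    have hstep := G_step (k := j + 8) (B := Nat.fib (j + 8) + Nat.fib (j + 7) + Nat.fib (j + 2)) (by omega) (by omega)
    have hi1 : j + 8 - 1 = j + 7 := by omega
    have hsub : Nat.fib (j + 8) + Nat.fib (j + 7) + Nat.fib (j + 2) - Nat.fib (j + 8) = Nat.fib (j + 7) + Nat.fib (j + 2) := by omega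
    rw [hi1, hsub] at hstep
    have ih2 := (IH (j + 7) (by omega)).2.2.2.2.2.2.2.2.2.2.2.2.2.2.2.1 j rfl
    have hsat := G_full (k := j + 7) (B := Nat.fib (j + 8) + Nat.fib (j + 7) + Nat.fib (j + 2)) (by omega) (by have hx1 : Nat.fib (j + 7 + 2) = Nat.fib (j + 9) := congrArg Nat.fib (by omega); omega)
    have hi2 : j + 7 - 1 = j + 6 := by omega
    rw [hi2] at hsat
    rw [hsat] at hstep
    rw [hstep]
    push_cast
    linear_combination ih2
  -- pattern (0, 1, 6, 11, 18)
  · intro j hn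
    subst hn
    have h0 : Nat.fib (j+2) = Nat.fib j + Nat.fib (j+1) := fib_split j 0
    have h1 : Nat.fib (j+3) = Nat.fib (j+1) + Nat.fib (j+2) := fib_split j 1
    have h2 : Nat.fib (j+4) = Nat.fib (j+2) + Nat.fib (j+3) := fib_split j 2
    have h3 : Nat.fib (j+5) = Nat.fib (j+3) + Nat.fib (j+4) := fib_split j 3
    have h4 : Nat.fib (j+6) = Nat.fib (j+4) + Nat.fib (j+5) := fib_split j 4
    have h5 : Nat.fib (j+7) = Nat.fib (j+5) + Nat.fib (j+6) := fib_split j 5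
    have h6 : Nat.fib (j+8) = Nat.fib (j+6) + Nat.fib (j+7) := fib_split j 6
    have h7 : Nat.fib (j+9) = Nat.fib (j+7) + Nat.fib (j+8) := fib_split j 7
    have h8 : Nat.fib (j+10) = Nat.fib (j+8) + Nat.fib (j+9) := fib_split j 8
    have h9 : Nat.fib (j+11) = Nat.fib (j+9) + Nat.fib (j+10) := fib_split j 9
    have h10 : Nat.fib (j+12) = Nat.fib (j+10) + Nat.fib (j+11) := fib_split j 10
    have h11 : Nat.fib (j+13) = Nat.fib (j+11) + Nat.fib (j+12) := fib_split j 11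
    have h12 : Nat.fib (j+14) = Nat.fib (j+12) + Nat.fib (j+13) := fib_split j 12
    have h13 : Nat.fib (j+15) = Nat.fib (j+13) + Nat.fib (j+14) := fib_split j 13
    have h14 : Nat.fib (j+16) = Nat.fib (j+14) + Nat.fib (j+15) := fib_split j 14
    have h15 : Nat.fib (j+17) = Nat.fib (j+15) + Nat.fib (j+16) := fib_split j 15
    have h16 : Nat.fib (j+18) = Nat.fib (j+16) + Nat.fib (j+17) := fib_split j 16
    have h17 : Nat.fib (j+19) = Nat.fib (j+17) + Nat.fib (j+18) := fib_split j 17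
    have h18 : Nat.fib (j+20) = Nat.fib (j+18) + Nat.fib (j+19) := fib_split j 18
    have h19 : Nat.fib (j+21) = Nat.fib (j+19) + Nat.fib (j+20) := fib_split j 19
    have hpos : 0 < Nat.fib (j+1) := Nat.fib_pos.mpr (by omega)
    have hstep := G_step (k := j + 20) (B := Nat.fib (j + 20) + Nat.fib (j + 19) + Nat.fib (j + 14) + Nat.fib (j + 9) + Nat.fib (j + 2)) (by omega) (by omega)
    have hi1 : j + 20 - 1 = j + 19 := by omega
    have hsub : Nat.fib (j + 20) + Nat.fib (j + 19) + Nat.fib (j + 14) + Nat.fib (j + 9) + Nat.fib (j + 2) - Nat.fib (j + 20) = Nat.fib (j + 19) + Nat.fib (j + 14) + Nat.fib (j + 9) + Nat.fib (j + 2) := by omega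
    rw [hi1, hsub] at hstep
    have ih2 := (IH (j + 19) (by omega)).2.2.2.2.2.2.2.2.2.2.2.2.2.2.2.2.1 j rfl
    have hsat := G_full (k := j + 19) (B := Nat.fib (j + 20) + Nat.fib (j + 19) + Nat.fib (j + 14) + Nat.fib (j + 9) + Nat.fib (j + 2)) (by omega) (by have hx1 : Nat.fib (j + 19 + 2) = Nat.fib (j + 21) := congrArg Nat.fib (by omega); omega)
    have hi2 : j + 19 - 1 = j + 18 := by omega
    rw [hi2] at hsat
    rw [hsat] at hstep
    rw [hstep]
    push_cast
    linear_combination ih2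
  -- pattern (0, 1, 6, 13)
  · intro j hn
    subst hn
    have h0 : Nat.fib (j+2) = Nat.fib j + Nat.fib (j+1) := fib_split j 0
    have h1 : Nat.fib (j+3) = Nat.fib (j+1) + Nat.fib (j+2) := fib_split j 1
    have h2 : Nat.fib (j+4) = Nat.fib (j+2) + Nat.fib (j+3) := fib_split j 2
    have h3 : Nat.fib (j+5) = Nat.fib (j+3) + Nat.fib (j+4) := fib_split j 3
    have h4 : Nat.fib (j+6) = Nat.fib (j+4) + Nat.fib (j+5) := fib_split j 4
    have h5 : Nat.fib (j+7) = Nat.fib (j+5) + Nat.fib (j+6) := fib_split j 5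
    have h6 : Nat.fib (j+8) = Nat.fib (j+6) + Nat.fib (j+7) := fib_split j 6
    have h7 : Nat.fib (j+9) = Nat.fib (j+7) + Nat.fib (j+8) := fib_split j 7
    have h8 : Nat.fib (j+10) = Nat.fib (j+8) + Nat.fib (j+9) := fib_split j 8
    have h9 : Nat.fib (j+11) = Nat.fib (j+9) + Nat.fib (j+10) := fib_split j 9
    have h10 : Nat.fib (j+12) = Nat.fib (j+10) + Nat.fib (j+11) := fib_split j 10
    have h11 : Nat.fib (j+13) = Nat.fib (j+11) + Nat.fib (j+12) := fib_split j 11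
    have h12 : Nat.fib (j+14) = Nat.fib (j+12) + Nat.fib (j+13) := fib_split j 12
    have h13 : Nat.fib (j+15) = Nat.fib (j+13) + Nat.fib (j+14) := fib_split j 13
    have h14 : Nat.fib (j+16) = Nat.fib (j+14) + Nat.fib (j+15) := fib_split j 14
    have hpos : 0 < Nat.fib (j+1) := Nat.fib_pos.mpr (by omega)
    have hstep := G_step (k := j + 15) (B := Nat.fib (j + 15) + Nat.fib (j + 14) + Nat.fib (j + 9) + Nat.fib (j + 2)) (by omega) (by omega)
    have hi1 : j + 15 - 1 = j + 14 := by omega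
    have hsub : Nat.fib (j + 15) + Nat.fib (j + 14) + Nat.fib (j + 9) + Nat.fib (j + 2) - Nat.fib (j + 15) = Nat.fib (j + 14) + Nat.fib (j + 9) + Nat.fib (j + 2) := by omega
    rw [hi1, hsub] at hstep
    have ih2 := (IH (j + 14) (by omega)).2.2.2.2.2.2.2.2.2.2.2.2.2.2.2.2.2.1 j rfl
    have hsat := G_full (k := j + 14) (B := Nat.fib (j + 15) + Nat.fib (j + 14) + Nat.fib (j + 9) + Nat.fib (j + 2)) (by omega) (by have hx1 : Nat.fib (j + 14 + 2) = Nat.fib (j + 16) := congrArg Nat.fib (by omega); omega)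
    have hi2 : j + 14 - 1 = j + 13 := by omega
    rw [hi2] at hsat
    rw [hsat] at hstep
    rw [hstep]
    push_cast
    linear_combination ih2
  -- pattern (0, 1, 8)
  · intro j hn
    subst hn
    have h0 : Nat.fib (j+2) = Nat.fib j + Nat.fib (j+1) := fib_split j 0
    have h1 : Nat.fib (j+3) = Nat.fib (j+1) + Nat.fib (j+2) := fib_split j 1
    have h2 : Nat.fib (j+4) = Nat.fib (j+2) + Nat.fib (j+3) := fib_split j 2
    have h3 : Nat.fib (j+5) = Nat.fib (j+3) + Nat.fib (j+4) := fib_split j 3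
    have h4 : Nat.fib (j+6) = Nat.fib (j+4) + Nat.fib (j+5) := fib_split j 4
    have h5 : Nat.fib (j+7) = Nat.fib (j+5) + Nat.fib (j+6) := fib_split j 5
    have h6 : Nat.fib (j+8) = Nat.fib (j+6) + Nat.fib (j+7) := fib_split j 6
    have h7 : Nat.fib (j+9) = Nat.fib (j+7) + Nat.fib (j+8) := fib_split j 7
    have h8 : Nat.fib (j+10) = Nat.fib (j+8) + Nat.fib (j+9) := fib_split j 8
    have h9 : Nat.fib (j+11) = Nat.fib (j+9) + Nat.fib (j+10) := fib_split j 9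
    have hpos : 0 < Nat.fib (j+1) := Nat.fib_pos.mpr (by omega)
    have hstep := G_step (k := j + 10) (B := Nat.fib (j + 10) + Nat.fib (j + 9) + Nat.fib (j + 2)) (by omega) (by omega)
    have hi1 : j + 10 - 1 = j + 9 := by omega
    have hsub : Nat.fib (j + 10) + Nat.fib (j + 9) + Nat.fib (j + 2) - Nat.fib (j + 10) = Nat.fib (j + 9) + Nat.fib (j + 2) := by omega
    rw [hi1, hsub] at hstep
    have ih2 := (IH (j + 9) (by omega)).2.2.2.2.2.2.2.2.2.2.2.2.2.2.2.2.2.2.1 j rfl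
    have hsat := G_full (k := j + 9) (B := Nat.fib (j + 10) + Nat.fib (j + 9) + Nat.fib (j + 2)) (by omega) (by have hx1 : Nat.fib (j + 9 + 2) = Nat.fib (j + 11) := congrArg Nat.fib (by omega); omega)
    have hi2 : j + 9 - 1 = j + 8 := by omega
    rw [hi2] at hsat
    rw [hsat] at hstep
    rw [hstep]
    push_cast
    linear_combination ih2
  -- pattern (0, 3)
  · intro j hn
    subst hn
    have h0 : Nat.fib (j+2) = Nat.fib j + Nat.fib (j+1) := fib_split j 0
    have h1 : Nat.fib (j+3) = Nat.fib (j+1) + Nat.fib (j+2) := fib_split j 1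
    have h2 : Nat.fib (j+4) = Nat.fib (j+2) + Nat.fib (j+3) := fib_split j 2
    have h3 : Nat.fib (j+5) = Nat.fib (j+3) + Nat.fib (j+4) := fib_split j 3
    have h4 : Nat.fib (j+6) = Nat.fib (j+4) + Nat.fib (j+5) := fib_split j 4
    have hpos : 0 < Nat.fib (j+1) := Nat.fib_pos.mpr (by omega)
    have hstep := G_step (k := j + 5) (B := Nat.fib (j + 5) + Nat.fib (j + 2)) (by omega) (by omega)
    have hi1 : j + 5 - 1 = j + 4 := by omega
    have hsub : Nat.fib (j + 5) + Nat.fib (j + 2) - Nat.fib (j + 5) = Nat.fib (j + 2) := by omega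
    rw [hi1, hsub] at hstep
    have hdrop := G_drop (k := j + 2) (s := 2) (B := Nat.fib (j + 2)) (by have hx2 : Nat.fib (j + 2 + 1) = Nat.fib (j + 3) := congrArg Nat.fib (by omega); omega)
    have hi3 : j + 2 + 2 = j + 4 := by omega
    rw [hi3] at hdrop
    rw [hdrop] at hstep
    have ih2 := (IH (j + 2) (by omega)).1 j rfl
    have ih1 := (IH (j + 4) (by omega)).2.2.1 j rfl
    have hcast : ((G (j + 4) (Nat.fib (j + 5) + Nat.fib (j + 2)) : ℕ) : ℤ) = ((G (j + 4) (Nat.fib (j + 4) + Nat.fib (j + 3) + Nat.fib (j + 2)) : ℕ) : ℤ) := by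
      rw [show Nat.fib (j + 5) + Nat.fib (j + 2) = Nat.fib (j + 4) + Nat.fib (j + 3) + Nat.fib (j + 2) from by omega]
    rw [hstep]
    push_cast
    linear_combination (1572864 : ℤ) * hcast + ih1 + ih2
  -- pattern (0, 3, 8, 15)
  · intro j hn
    subst hn
    have h0 : Nat.fib (j+2) = Nat.fib j + Nat.fib (j+1) := fib_split j 0
    have h1 : Nat.fib (j+3) = Nat.fib (j+1) + Nat.fib (j+2) := fib_split j 1
    have h2 : Nat.fib (j+4) = Nat.fib (j+2) + Nat.fib (j+3) := fib_split j 2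
    have h3 : Nat.fib (j+5) = Nat.fib (j+3) + Nat.fib (j+4) := fib_split j 3
    have h4 : Nat.fib (j+6) = Nat.fib (j+4) + Nat.fib (j+5) := fib_split j 4
    have h5 : Nat.fib (j+7) = Nat.fib (j+5) + Nat.fib (j+6) := fib_split j 5
    have h6 : Nat.fib (j+8) = Nat.fib (j+6) + Nat.fib (j+7) := fib_split j 6
    have h7 : Nat.fib (j+9) = Nat.fib (j+7) + Nat.fib (j+8) := fib_split j 7
    have h8 : Nat.fib (j+10) = Nat.fib (j+8) + Nat.fib (j+9) := fib_split j 8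
    have h9 : Nat.fib (j+11) = Nat.fib (j+9) + Nat.fib (j+10) := fib_split j 9
    have h10 : Nat.fib (j+12) = Nat.fib (j+10) + Nat.fib (j+11) := fib_split j 10
    have h11 : Nat.fib (j+13) = Nat.fib (j+11) + Nat.fib (j+12) := fib_split j 11
    have h12 : Nat.fib (j+14) = Nat.fib (j+12) + Nat.fib (j+13) := fib_split j 12
    have h13 : Nat.fib (j+15) = Nat.fib (j+13) + Nat.fib (j+14) := fib_split j 13
    have h14 : Nat.fib (j+16) = Nat.fib (j+14) + Nat.fib (j+15) := fib_split j 14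
    have h15 : Nat.fib (j+17) = Nat.fib (j+15) + Nat.fib (j+16) := fib_split j 15
    have h16 : Nat.fib (j+18) = Nat.fib (j+16) + Nat.fib (j+17) := fib_split j 16
    have hpos : 0 < Nat.fib (j+1) := Nat.fib_pos.mpr (by omega)
    have hstep := G_step (k := j + 17) (B := Nat.fib (j + 17) + Nat.fib (j + 14) + Nat.fib (j + 9) + Nat.fib (j + 2)) (by omega) (by omega)
    have hi1 : j + 17 - 1 = j + 16 := by omega
    have hsub : Nat.fib (j + 17) + Nat.fib (j + 14) + Nat.fib (j + 9) + Nat.fib (j + 2) - Nat.fib (j + 17) = Nat.fib (j + 14) + Nat.fib (j + 9) + Nat.fib (j + 2) := by omega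
    rw [hi1, hsub] at hstep
    have hdrop := G_drop (k := j + 14) (s := 2) (B := Nat.fib (j + 14) + Nat.fib (j + 9) + Nat.fib (j + 2)) (by have hx2 : Nat.fib (j + 14 + 1) = Nat.fib (j + 15) := congrArg Nat.fib (by omega); omega)
    have hi3 : j + 14 + 2 = j + 16 := by omega
    rw [hi3] at hdrop
    rw [hdrop] at hstep
    have ih2 := (IH (j + 14) (by omega)).2.2.2.2.2.2.2.2.2.2.2.2.2.2.2.2.2.1 j rfl
    have ih1 := (IH (j + 16) (by omega)).2.2.2.1 j rfl
    have hcast : ((G (j + 16) (Nat.fib (j + 17) + Nat.fib (j + 14) + Nat.fib (j + 9) + Nat.fib (j + 2)) : ℕ) : ℤ) = ((G (j + 16) (Nat.fib (j + 16) + Nat.fib (j + 15) + Nat.fib (j + 14) + Nat.fib (j + 9) + Nat.fib (j + 2)) : ℕ) : ℤ) := by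
      rw [show Nat.fib (j + 17) + Nat.fib (j + 14) + Nat.fib (j + 9) + Nat.fib (j + 2) = Nat.fib (j + 16) + Nat.fib (j + 15) + Nat.fib (j + 14) + Nat.fib (j + 9) + Nat.fib (j + 2) from by omega]
    rw [hstep]
    push_cast
    linear_combination (1572864 : ℤ) * hcast + ih1 + ih2
  -- pattern (0, 3, 10)
  · intro j hn
    subst hn
    have h0 : Nat.fib (j+2) = Nat.fib j + Nat.fib (j+1) := fib_split j 0
    have h1 : Nat.fib (j+3) = Nat.fib (j+1) + Nat.fib (j+2) := fib_split j 1
    have h2 : Nat.fib (j+4) = Nat.fib (j+2) + Nat.fib (j+3) := fib_split j 2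
    have h3 : Nat.fib (j+5) = Nat.fib (j+3) + Nat.fib (j+4) := fib_split j 3
    have h4 : Nat.fib (j+6) = Nat.fib (j+4) + Nat.fib (j+5) := fib_split j 4
    have h5 : Nat.fib (j+7) = Nat.fib (j+5) + Nat.fib (j+6) := fib_split j 5
    have h6 : Nat.fib (j+8) = Nat.fib (j+6) + Nat.fib (j+7) := fib_split j 6
    have h7 : Nat.fib (j+9) = Nat.fib (j+7) + Nat.fib (j+8) := fib_split j 7
    have h8 : Nat.fib (j+10) = Nat.fib (j+8) + Nat.fib (j+9) := fib_split j 8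
    have h9 : Nat.fib (j+11) = Nat.fib (j+9) + Nat.fib (j+10) := fib_split j 9
    have h10 : Nat.fib (j+12) = Nat.fib (j+10) + Nat.fib (j+11) := fib_split j 10
    have h11 : Nat.fib (j+13) = Nat.fib (j+11) + Nat.fib (j+12) := fib_split j 11
    have hpos : 0 < Nat.fib (j+1) := Nat.fib_pos.mpr (by omega)
    have hstep := G_step (k := j + 12) (B := Nat.fib (j + 12) + Nat.fib (j + 9) + Nat.fib (j + 2)) (by omega) (by omega)
    have hi1 : j + 12 - 1 = j + 11 := by omega
    have hsub : Nat.fib (j + 12) + Nat.fib (j + 9) + Nat.fib (j + 2) - Nat.fib (j + 12) = Nat.fib (j + 9) + Nat.fib (j + 2) := by omega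
    rw [hi1, hsub] at hstep
    have hdrop := G_drop (k := j + 9) (s := 2) (B := Nat.fib (j + 9) + Nat.fib (j + 2)) (by have hx2 : Nat.fib (j + 9 + 1) = Nat.fib (j + 10) := congrArg Nat.fib (by omega); omega)
    have hi3 : j + 9 + 2 = j + 11 := by omega
    rw [hi3] at hdrop
    rw [hdrop] at hstep
    have ih2 := (IH (j + 9) (by omega)).2.2.2.2.2.2.2.2.2.2.2.2.2.2.2.2.2.2.1 j rfl
    have ih1 := (IH (j + 11) (by omega)).2.2.2.2.1 j rfl
    have hcast : ((G (j + 11) (Nat.fib (j + 12) + Nat.fib (j + 9) + Nat.fib (j + 2)) : ℕ) : ℤ) = ((G (j + 11) (Nat.fib (j + 11) + Nat.fib (j + 10) + Nat.fib (j + 9) + Nat.fib (j + 2)) : ℕ) : ℤ) := by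
      rw [show Nat.fib (j + 12) + Nat.fib (j + 9) + Nat.fib (j + 2) = Nat.fib (j + 11) + Nat.fib (j + 10) + Nat.fib (j + 9) + Nat.fib (j + 2) from by omega]
    rw [hstep]
    push_cast
    linear_combination (1572864 : ℤ) * hcast + ih1 + ih2
  -- pattern (0, 5)
  · intro j hn
    subst hn
    have h0 : Nat.fib (j+2) = Nat.fib j + Nat.fib (j+1) := fib_split j 0
    have h1 : Nat.fib (j+3) = Nat.fib (j+1) + Nat.fib (j+2) := fib_split j 1
    have h2 : Nat.fib (j+4) = Nat.fib (j+2) + Nat.fib (j+3) := fib_split j 2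
    have h3 : Nat.fib (j+5) = Nat.fib (j+3) + Nat.fib (j+4) := fib_split j 3
    have h4 : Nat.fib (j+6) = Nat.fib (j+4) + Nat.fib (j+5) := fib_split j 4
    have h5 : Nat.fib (j+7) = Nat.fib (j+5) + Nat.fib (j+6) := fib_split j 5
    have h6 : Nat.fib (j+8) = Nat.fib (j+6) + Nat.fib (j+7) := fib_split j 6
    have hpos : 0 < Nat.fib (j+1) := Nat.fib_pos.mpr (by omega)
    have hstep := G_step (k := j + 7) (B := Nat.fib (j + 7) + Nat.fib (j + 2)) (by omega) (by omega)
    have hi1 : j + 7 - 1 = j + 6 := by omega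
    have hsub : Nat.fib (j + 7) + Nat.fib (j + 2) - Nat.fib (j + 7) = Nat.fib (j + 2) := by omega
    rw [hi1, hsub] at hstep
    have hdrop := G_drop (k := j + 2) (s := 4) (B := Nat.fib (j + 2)) (by have hx2 : Nat.fib (j + 2 + 1) = Nat.fib (j + 3) := congrArg Nat.fib (by omega); omega)
    have hi3 : j + 2 + 4 = j + 6 := by omega
    rw [hi3] at hdrop
    rw [hdrop] at hstep
    have ih2 := (IH (j + 2) (by omega)).1 j rfl
    have ih1 := (IH (j + 6) (by omega)).2.2.2.2.2.1 j rfl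
    have hcast : ((G (j + 6) (Nat.fib (j + 7) + Nat.fib (j + 2)) : ℕ) : ℤ) = ((G (j + 6) (Nat.fib (j + 6) + Nat.fib (j + 5) + Nat.fib (j + 2)) : ℕ) : ℤ) := by
      rw [show Nat.fib (j + 7) + Nat.fib (j + 2) = Nat.fib (j + 6) + Nat.fib (j + 5) + Nat.fib (j + 2) from by omega]
    rw [hstep]
    push_cast
    linear_combination (1572864 : ℤ) * hcast + ih1 + ih2
  -- pattern (0, 5, 10, 17)
  · intro j hn
    subst hn
    have h0 : Nat.fib (j+2) = Nat.fib j + Nat.fib (j+1) := fib_split j 0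
    have h1 : Nat.fib (j+3) = Nat.fib (j+1) + Nat.fib (j+2) := fib_split j 1
    have h2 : Nat.fib (j+4) = Nat.fib (j+2) + Nat.fib (j+3) := fib_split j 2
    have h3 : Nat.fib (j+5) = Nat.fib (j+3) + Nat.fib (j+4) := fib_split j 3
    have h4 : Nat.fib (j+6) = Nat.fib (j+4) + Nat.fib (j+5) := fib_split j 4
    have h5 : Nat.fib (j+7) = Nat.fib (j+5) + Nat.fib (j+6) := fib_split j 5
    have h6 : Nat.fib (j+8) = Nat.fib (j+6) + Nat.fib (j+7) := fib_split j 6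
    have h7 : Nat.fib (j+9) = Nat.fib (j+7) + Nat.fib (j+8) := fib_split j 7
    have h8 : Nat.fib (j+10) = Nat.fib (j+8) + Nat.fib (j+9) := fib_split j 8
    have h9 : Nat.fib (j+11) = Nat.fib (j+9) + Nat.fib (j+10) := fib_split j 9
    have h10 : Nat.fib (j+12) = Nat.fib (j+10) + Nat.fib (j+11) := fib_split j 10
    have h11 : Nat.fib (j+13) = Nat.fib (j+11) + Nat.fib (j+12) := fib_split j 11
    have h12 : Nat.fib (j+14) = Nat.fib (j+12) + Nat.fib (j+13) := fib_split j 12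
    have h13 : Nat.fib (j+15) = Nat.fib (j+13) + Nat.fib (j+14) := fib_split j 13
    have h14 : Nat.fib (j+16) = Nat.fib (j+14) + Nat.fib (j+15) := fib_split j 14
    have h15 : Nat.fib (j+17) = Nat.fib (j+15) + Nat.fib (j+16) := fib_split j 15
    have h16 : Nat.fib (j+18) = Nat.fib (j+16) + Nat.fib (j+17) := fib_split j 16
    have h17 : Nat.fib (j+19) = Nat.fib (j+17) + Nat.fib (j+18) := fib_split j 17
    have h18 : Nat.fib (j+20) = Nat.fib (j+18) + Nat.fib (j+19) := fib_split j 18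
    have hpos : 0 < Nat.fib (j+1) := Nat.fib_pos.mpr (by omega)
    have hstep := G_step (k := j + 19) (B := Nat.fib (j + 19) + Nat.fib (j + 14) + Nat.fib (j + 9) + Nat.fib (j + 2)) (by omega) (by omega)
    have hi1 : j + 19 - 1 = j + 18 := by omega
    have hsub : Nat.fib (j + 19) + Nat.fib (j + 14) + Nat.fib (j + 9) + Nat.fib (j + 2) - Nat.fib (j + 19) = Nat.fib (j + 14) + Nat.fib (j + 9) + Nat.fib (j + 2) := by omega
    rw [hi1, hsub] at hstep
    have hdrop := G_drop (k := j + 14) (s := 4) (B := Nat.fib (j + 14) + Nat.fib (j + 9) + Nat.fib (j + 2)) (by have hx2 : Nat.fib (j + 14 + 1) = Nat.fib (j + 15) := congrArg Nat.fib (by omega); omega)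
    have hi3 : j + 14 + 4 = j + 18 := by omega
    rw [hi3] at hdrop
    rw [hdrop] at hstep
    have ih2 := (IH (j + 14) (by omega)).2.2.2.2.2.2.2.2.2.2.2.2.2.2.2.2.2.1 j rfl
    have ih1 := (IH (j + 18) (by omega)).2.2.2.2.2.2.1 j rfl
    have hcast : ((G (j + 18) (Nat.fib (j + 19) + Nat.fib (j + 14) + Nat.fib (j + 9) + Nat.fib (j + 2)) : ℕ) : ℤ) = ((G (j + 18) (Nat.fib (j + 18) + Nat.fib (j + 17) + Nat.fib (j + 14) + Nat.fib (j + 9) + Nat.fib (j + 2)) : ℕ) : ℤ) := by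
      rw [show Nat.fib (j + 19) + Nat.fib (j + 14) + Nat.fib (j + 9) + Nat.fib (j + 2) = Nat.fib (j + 18) + Nat.fib (j + 17) + Nat.fib (j + 14) + Nat.fib (j + 9) + Nat.fib (j + 2) from by omega]
    rw [hstep]
    push_cast
    linear_combination (1572864 : ℤ) * hcast + ih1 + ih2
  -- pattern (0, 5, 12)
  · intro j hn
    subst hn
    have h0 : Nat.fib (j+2) = Nat.fib j + Nat.fib (j+1) := fib_split j 0
    have h1 : Nat.fib (j+3) = Nat.fib (j+1) + Nat.fib (j+2) := fib_split j 1
    have h2 : Nat.fib (j+4) = Nat.fib (j+2) + Nat.fib (j+3) := fib_split j 2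
    have h3 : Nat.fib (j+5) = Nat.fib (j+3) + Nat.fib (j+4) := fib_split j 3
    have h4 : Nat.fib (j+6) = Nat.fib (j+4) + Nat.fib (j+5) := fib_split j 4
    have h5 : Nat.fib (j+7) = Nat.fib (j+5) + Nat.fib (j+6) := fib_split j 5
    have h6 : Nat.fib (j+8) = Nat.fib (j+6) + Nat.fib (j+7) := fib_split j 6
    have h7 : Nat.fib (j+9) = Nat.fib (j+7) + Nat.fib (j+8) := fib_split j 7
    have h8 : Nat.fib (j+10) = Nat.fib (j+8) + Nat.fib (j+9) := fib_split j 8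
    have h9 : Nat.fib (j+11) = Nat.fib (j+9) + Nat.fib (j+10) := fib_split j 9
    have h10 : Nat.fib (j+12) = Nat.fib (j+10) + Nat.fib (j+11) := fib_split j 10
    have h11 : Nat.fib (j+13) = Nat.fib (j+11) + Nat.fib (j+12) := fib_split j 11
    have h12 : Nat.fib (j+14) = Nat.fib (j+12) + Nat.fib (j+13) := fib_split j 12
    have h13 : Nat.fib (j+15) = Nat.fib (j+13) + Nat.fib (j+14) := fib_split j 13
    have hpos : 0 < Nat.fib (j+1) := Nat.fib_pos.mpr (by omega)
    have hstep := G_step (k := j + 14) (B := Nat.fib (j + 14) + Nat.fib (j + 9) + Nat.fib (j + 2)) (by omega) (by omega)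
    have hi1 : j + 14 - 1 = j + 13 := by omega
    have hsub : Nat.fib (j + 14) + Nat.fib (j + 9) + Nat.fib (j + 2) - Nat.fib (j + 14) = Nat.fib (j + 9) + Nat.fib (j + 2) := by omega
    rw [hi1, hsub] at hstep
    have hdrop := G_drop (k := j + 9) (s := 4) (B := Nat.fib (j + 9) + Nat.fib (j + 2)) (by have hx2 : Nat.fib (j + 9 + 1) = Nat.fib (j + 10) := congrArg Nat.fib (by omega); omega)
    have hi3 : j + 9 + 4 = j + 13 := by omega
    rw [hi3] at hdrop
    rw [hdrop] at hstep
    have ih2 := (IH (j + 9) (by omega)).2.2.2.2.2.2.2.2.2.2.2.2.2.2.2.2.2.2.1 j rfl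
    have ih1 := (IH (j + 13) (by omega)).2.2.2.2.2.2.2.1 j rfl
    have hcast : ((G (j + 13) (Nat.fib (j + 14) + Nat.fib (j + 9) + Nat.fib (j + 2)) : ℕ) : ℤ) = ((G (j + 13) (Nat.fib (j + 13) + Nat.fib (j + 12) + Nat.fib (j + 9) + Nat.fib (j + 2)) : ℕ) : ℤ) := by
      rw [show Nat.fib (j + 14) + Nat.fib (j + 9) + Nat.fib (j + 2) = Nat.fib (j + 13) + Nat.fib (j + 12) + Nat.fib (j + 9) + Nat.fib (j + 2) from by omega]
    rw [hstep]
    push_cast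
    linear_combination (1572864 : ℤ) * hcast + ih1 + ih2
  -- pattern (0, 7)
  · intro j hn
    subst hn
    have h0 : Nat.fib (j+2) = Nat.fib j + Nat.fib (j+1) := fib_split j 0
    have h1 : Nat.fib (j+3) = Nat.fib (j+1) + Nat.fib (j+2) := fib_split j 1
    have h2 : Nat.fib (j+4) = Nat.fib (j+2) + Nat.fib (j+3) := fib_split j 2
    have h3 : Nat.fib (j+5) = Nat.fib (j+3) + Nat.fib (j+4) := fib_split j 3
    have h4 : Nat.fib (j+6) = Nat.fib (j+4) + Nat.fib (j+5) := fib_split j 4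
    have h5 : Nat.fib (j+7) = Nat.fib (j+5) + Nat.fib (j+6) := fib_split j 5
    have h6 : Nat.fib (j+8) = Nat.fib (j+6) + Nat.fib (j+7) := fib_split j 6
    have h7 : Nat.fib (j+9) = Nat.fib (j+7) + Nat.fib (j+8) := fib_split j 7
    have h8 : Nat.fib (j+10) = Nat.fib (j+8) + Nat.fib (j+9) := fib_split j 8
    have hpos : 0 < Nat.fib (j+1) := Nat.fib_pos.mpr (by omega)
    have hstep := G_step (k := j + 9) (B := Nat.fib (j + 9) + Nat.fib (j + 2)) (by omega) (by omega)
    have hi1 : j + 9 - 1 = j + 8 := by omega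
    have hsub : Nat.fib (j + 9) + Nat.fib (j + 2) - Nat.fib (j + 9) = Nat.fib (j + 2) := by omega
    rw [hi1, hsub] at hstep
    have hdrop := G_drop (k := j + 2) (s := 6) (B := Nat.fib (j + 2)) (by have hx2 : Nat.fib (j + 2 + 1) = Nat.fib (j + 3) := congrArg Nat.fib (by omega); omega)
    have hi3 : j + 2 + 6 = j + 8 := by omega
    rw [hi3] at hdrop
    rw [hdrop] at hstep
    have ih2 := (IH (j + 2) (by omega)).1 j rfl
    have ih1 := (IH (j + 8) (by omega)).2.2.2.2.2.2.2.2.1 j rfl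
    have hcast : ((G (j + 8) (Nat.fib (j + 9) + Nat.fib (j + 2)) : ℕ) : ℤ) = ((G (j + 8) (Nat.fib (j + 8) + Nat.fib (j + 7) + Nat.fib (j + 2)) : ℕ) : ℤ) := by
      rw [show Nat.fib (j + 9) + Nat.fib (j + 2) = Nat.fib (j + 8) + Nat.fib (j + 7) + Nat.fib (j + 2) from by omega]
    rw [hstep]
    push_cast
    linear_combination (1572864 : ℤ) * hcast + ih1 + ih2
  -- pattern (0, 7, 12, 19)
  · intro j hn
    subst hn
    have h0 : Nat.fib (j+2) = Nat.fib j + Nat.fib (j+1) := fib_split j 0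
    have h1 : Nat.fib (j+3) = Nat.fib (j+1) + Nat.fib (j+2) := fib_split j 1
    have h2 : Nat.fib (j+4) = Nat.fib (j+2) + Nat.fib (j+3) := fib_split j 2
    have h3 : Nat.fib (j+5) = Nat.fib (j+3) + Nat.fib (j+4) := fib_split j 3
    have h4 : Nat.fib (j+6) = Nat.fib (j+4) + Nat.fib (j+5) := fib_split j 4
    have h5 : Nat.fib (j+7) = Nat.fib (j+5) + Nat.fib (j+6) := fib_split j 5
    have h6 : Nat.fib (j+8) = Nat.fib (j+6) + Nat.fib (j+7) := fib_split j 6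
    have h7 : Nat.fib (j+9) = Nat.fib (j+7) + Nat.fib (j+8) := fib_split j 7
    have h8 : Nat.fib (j+10) = Nat.fib (j+8) + Nat.fib (j+9) := fib_split j 8
    have h9 : Nat.fib (j+11) = Nat.fib (j+9) + Nat.fib (j+10) := fib_split j 9
    have h10 : Nat.fib (j+12) = Nat.fib (j+10) + Nat.fib (j+11) := fib_split j 10
    have h11 : Nat.fib (j+13) = Nat.fib (j+11) + Nat.fib (j+12) := fib_split j 11
    have h12 : Nat.fib (j+14) = Nat.fib (j+12) + Nat.fib (j+13) := fib_split j 12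
    have h13 : Nat.fib (j+15) = Nat.fib (j+13) + Nat.fib (j+14) := fib_split j 13
    have h14 : Nat.fib (j+16) = Nat.fib (j+14) + Nat.fib (j+15) := fib_split j 14
    have h15 : Nat.fib (j+17) = Nat.fib (j+15) + Nat.fib (j+16) := fib_split j 15
    have h16 : Nat.fib (j+18) = Nat.fib (j+16) + Nat.fib (j+17) := fib_split j 16
    have h17 : Nat.fib (j+19) = Nat.fib (j+17) + Nat.fib (j+18) := fib_split j 17
    have h18 : Nat.fib (j+20) = Nat.fib (j+18) + Nat.fib (j+19) := fib_split j 18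
    have h19 : Nat.fib (j+21) = Nat.fib (j+19) + Nat.fib (j+20) := fib_split j 19
    have h20 : Nat.fib (j+22) = Nat.fib (j+20) + Nat.fib (j+21) := fib_split j 20
    have hpos : 0 < Nat.fib (j+1) := Nat.fib_pos.mpr (by omega)
    have hstep := G_step (k := j + 21) (B := Nat.fib (j + 21) + Nat.fib (j + 14) + Nat.fib (j + 9) + Nat.fib (j + 2)) (by omega) (by omega)
    have hi1 : j + 21 - 1 = j + 20 := by omega
    have hsub : Nat.fib (j + 21) + Nat.fib (j + 14) + Nat.fib (j + 9) + Nat.fib (j + 2) - Nat.fib (j + 21) = Nat.fib (j + 14) + Nat.fib (j + 9) + Nat.fib (j + 2) := by omega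
    rw [hi1, hsub] at hstep
    have hdrop := G_drop (k := j + 14) (s := 6) (B := Nat.fib (j + 14) + Nat.fib (j + 9) + Nat.fib (j + 2)) (by have hx2 : Nat.fib (j + 14 + 1) = Nat.fib (j + 15) := congrArg Nat.fib (by omega); omega)
    have hi3 : j + 14 + 6 = j + 20 := by omega
    rw [hi3] at hdrop
    rw [hdrop] at hstep
    have ih2 := (IH (j + 14) (by omega)).2.2.2.2.2.2.2.2.2.2.2.2.2.2.2.2.2.1 j rfl
    have ih1 := (IH (j + 20) (by omega)).2.2.2.2.2.2.2.2.2.1 j rfl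
    have hcast : ((G (j + 20) (Nat.fib (j + 21) + Nat.fib (j + 14) + Nat.fib (j + 9) + Nat.fib (j + 2)) : ℕ) : ℤ) = ((G (j + 20) (Nat.fib (j + 20) + Nat.fib (j + 19) + Nat.fib (j + 14) + Nat.fib (j + 9) + Nat.fib (j + 2)) : ℕ) : ℤ) := by
      rw [show Nat.fib (j + 21) + Nat.fib (j + 14) + Nat.fib (j + 9) + Nat.fib (j + 2) = Nat.fib (j + 20) + Nat.fib (j + 19) + Nat.fib (j + 14) + Nat.fib (j + 9) + Nat.fib (j + 2) from by omega]
    rw [hstep]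
    push_cast
    linear_combination (1572864 : ℤ) * hcast + ih1 + ih2


lemma A_formula_real (n : ℕ) :
    (A (Nat.fib (n+21) + Nat.fib (n+14) + Nat.fib (n+9) + Nat.fib (n+2)) : ℝ) =
      364584 * 2^n + 24*n + 60 + 4*(-1)^n := by
  have hQ := (Qmain (n+21)).2.2.2.2.2.2.2.2.2.2.2.2.2.2.2.2.2.2.2 n rfl
  have hA : A (Nat.fib (n+21) + Nat.fib (n+14) + Nat.fib (n+9) + Nat.fib (n+2))
      = G (n+21) (Nat.fib (n+21) + Nat.fib (n+14) + Nat.fib (n+9) + Nat.fib (n+2)) := by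
    apply A_eq_G (by omega)
    have h0 : Nat.fib (n+2) = Nat.fib (n+0) + Nat.fib (n+1) := fib_split n 0
    have h1 : Nat.fib (n+3) = Nat.fib (n+1) + Nat.fib (n+2) := fib_split n 1
    have h2 : Nat.fib (n+4) = Nat.fib (n+2) + Nat.fib (n+3) := fib_split n 2
    have h3 : Nat.fib (n+5) = Nat.fib (n+3) + Nat.fib (n+4) := fib_split n 3
    have h4 : Nat.fib (n+6) = Nat.fib (n+4) + Nat.fib (n+5) := fib_split n 4
    have h5 : Nat.fib (n+7) = Nat.fib (n+5) + Nat.fib (n+6) := fib_split n 5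
    have h6 : Nat.fib (n+8) = Nat.fib (n+6) + Nat.fib (n+7) := fib_split n 6
    have h7 : Nat.fib (n+9) = Nat.fib (n+7) + Nat.fib (n+8) := fib_split n 7
    have h8 : Nat.fib (n+10) = Nat.fib (n+8) + Nat.fib (n+9) := fib_split n 8
    have h9 : Nat.fib (n+11) = Nat.fib (n+9) + Nat.fib (n+10) := fib_split n 9
    have h10 : Nat.fib (n+12) = Nat.fib (n+10) + Nat.fib (n+11) := fib_split n 10
    have h11 : Nat.fib (n+13) = Nat.fib (n+11) + Nat.fib (n+12) := fib_split n 11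
    have h12 : Nat.fib (n+14) = Nat.fib (n+12) + Nat.fib (n+13) := fib_split n 12
    have h13 : Nat.fib (n+15) = Nat.fib (n+13) + Nat.fib (n+14) := fib_split n 13
    have h14 : Nat.fib (n+16) = Nat.fib (n+14) + Nat.fib (n+15) := fib_split n 14
    have h15 : Nat.fib (n+17) = Nat.fib (n+15) + Nat.fib (n+16) := fib_split n 15
    have h16 : Nat.fib (n+18) = Nat.fib (n+16) + Nat.fib (n+17) := fib_split n 16
    have h17 : Nat.fib (n+19) = Nat.fib (n+17) + Nat.fib (n+18) := fib_split n 17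
    have h18 : Nat.fib (n+20) = Nat.fib (n+18) + Nat.fib (n+19) := fib_split n 18
    have h19 : Nat.fib (n+21) = Nat.fib (n+19) + Nat.fib (n+20) := fib_split n 19
    have h20 : Nat.fib (n+22) = Nat.fib (n+20) + Nat.fib (n+21) := fib_split n 20
    have hpos : 0 < Nat.fib (n+1) := Nat.fib_pos.mpr (by omega)
    have hx : Nat.fib (n + 21 + 1) = Nat.fib (n + 22) := congrArg Nat.fib (by omega)
    omega
  rw [hA]
  have hr := congrArg (fun z : ℤ => (z : ℝ)) hQ
  push_cast at hr ⊢
  linarith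

lemma pow_rpow_base (x lam : ℝ) (hx : 1 < x) (hlam : lam = Real.log 2 / Real.log x) (M : ℕ) :
    ((x ^ M : ℝ)) ^ lam = 2 ^ M := by
  have hxpos : (0:ℝ) < x := by linarith
  have hlg : Real.log x ≠ 0 := ne_of_gt (Real.log_pos hx)
  rw [Real.rpow_def_of_pos (pow_pos hxpos M), Real.log_pow]
  have : (M : ℝ) * Real.log x * lam = M * Real.log 2 := by
    rw [hlam]; field_simp
  rw [this, Real.exp_nat_mul, Real.exp_log (by norm_num : (0:ℝ) < 2)]

lemma hu_lim : Tendsto (fun n : ℕ =>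
      (A (Nat.fib (n+21) + Nat.fib (n+14) + Nat.fib (n+9) + Nat.fib (n+2)) : ℝ) / 2^(n+21))
      atTop (𝓝 (45573/262144)) := by
  have h1 : Tendsto (fun n : ℕ => (n : ℝ) * (1/2:ℝ)^n) atTop (𝓝 0) :=
    tendsto_self_mul_const_pow_of_lt_one (by norm_num) (by norm_num)
  have h2 : Tendsto (fun n : ℕ => ((1:ℝ)/2)^n) atTop (𝓝 0) :=
    tendsto_pow_atTop_nhds_zero_of_lt_one (by norm_num) (by norm_num)
  have h3 : Tendsto (fun n : ℕ => ((-1:ℝ)/2)^n) atTop (𝓝 0) := by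
    apply tendsto_pow_atTop_nhds_zero_of_norm_lt_one
    rw [norm_div, norm_neg, norm_one]
    simp [Real.norm_eq_abs]
    norm_num
  have hmain : Tendsto (fun n : ℕ =>
      (45573/262144 : ℝ) + (24*((n:ℝ)*(1/2)^n) + 60*((1/2:ℝ))^n + 4*((-1/2:ℝ))^n)/2097152)
      atTop (𝓝 (45573/262144 + (24*0 + 60*0 + 4*0)/2097152)) := by
    exact tendsto_const_nhds.add
      ((((h1.const_mul 24).add (h2.const_mul 60)).add (h3.const_mul 4)).div_const 2097152)
  have hval : (45573/262144 : ℝ) + (24*0 + 60*0 + 4*0)/2097152 = 45573/262144 := by norm_num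
  rw [hval] at hmain
  apply hmain.congr
  intro n
  rw [A_formula_real]
  have hp : (2:ℝ)^(n+21) = 2^n * 2^21 := pow_add 2 n 21
  have hne : (2:ℝ)^n ≠ 0 := by positivity
  have hneg : ((-1:ℝ)/2)^n = (-1)^n / 2^n := div_pow (-1) 2 n
  have hhalf : ((1:ℝ)/2)^n = 1 / 2^n := by rw [div_pow, one_pow]
  rw [hp, hneg, hhalf]
  field_simp
  ring

/-- Example with `H_m = F_m + F_{m-7} + F_{m-12} + F_{m-19}`. -/
theorem summatory_example_asymptotic (φ lam : ℝ)
    (hφ : φ = (1 + Real.sqrt 5) / 2)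
    (hlam : lam = Real.log 2 / Real.log φ)
    (Hm : ℕ → ℕ)
    (hHm : ∀ m : ℕ, 21 ≤ m →
      Hm m = Nat.fib m + Nat.fib (m - 7) + Nat.fib (m - 12) + Nat.fib (m - 19)) :
    Tendsto (fun m : ℕ => (A (Hm m) : ℝ) / ((Hm m : ℕ) : ℝ) ^ lam) atTop
      (𝓝 ((45573 / 262144) *
        (Real.sqrt 5 / (1 + φ ^ (-7 : ℤ) + φ ^ (-12 : ℤ) + φ ^ (-19 : ℤ))) ^ lam)) := by
  have hφg : φ = Real.goldenRatio := hφ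
  obtain ⟨ψ, hψ⟩ : ∃ x : ℝ, x = Real.goldenConj := ⟨_, rfl⟩
  have hbinet : ∀ k : ℕ, (Nat.fib k : ℝ) = (φ^k - ψ^k)/Real.sqrt 5 := by
    intro k; rw [hφg, hψ]; exact Real.coe_fib_eq k
  have hgpos : (0:ℝ) < φ := by rw [hφg]; exact Real.goldenRatio_pos
  have hg1 : (1:ℝ) < φ := by rw [hφg]; exact Real.one_lt_goldenRatio
  have hψa : |ψ| < 1 := by
    rw [hψ]; exact abs_lt.2 ⟨Real.neg_one_lt_goldenConj, by linarith [Real.goldenConj_neg]⟩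
  have hs5 : (0:ℝ) < Real.sqrt 5 := by positivity
  apply (tendsto_add_atTop_iff_nat 21).mp
  have hHn : ∀ n : ℕ, Hm (n + 21) =
      Nat.fib (n+21) + Nat.fib (n+14) + Nat.fib (n+9) + Nat.fib (n+2) := by
    intro n
    rw [hHm (n+21) (by omega), show n+21-7 = n+14 from by omega,
      show n+21-12 = n+9 from by omega, show n+21-19 = n+2 from by omega]
  set Ctot : ℝ := (φ^19 + φ^12 + φ^7 + 1)/(Real.sqrt 5 * φ^19) with hCtot
  have hCpos : 0 < Ctot := by rw [hCtot]; positivity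
  -- limit of Hm (n+21) / φ^(n+21)
  have hv : Tendsto (fun n : ℕ => ((Hm (n+21) : ℕ) : ℝ) / φ^(n+21)) atTop (𝓝 Ctot) := by
    have hψg : ‖ψ / φ‖ < 1 := by
      rw [norm_div, Real.norm_eq_abs, Real.norm_eq_abs, abs_of_pos hgpos, div_lt_one hgpos]
      linarith
    have hr : Tendsto (fun n : ℕ => (ψ / φ)^n) atTop (𝓝 0) :=
      tendsto_pow_atTop_nhds_zero_of_norm_lt_one hψg
    set D : ℝ := (ψ^21 + ψ^14 + ψ^9 + ψ^2)/(Real.sqrt 5 * φ^21) with hD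
    have hlim : Tendsto (fun n : ℕ => Ctot - D * (ψ / φ)^n) atTop (𝓝 (Ctot - D * 0)) :=
      tendsto_const_nhds.sub (hr.const_mul D)
    rw [mul_zero, sub_zero] at hlim
    apply hlim.congr
    intro n
    rw [hHn n]
    push_cast
    rw [hbinet, hbinet, hbinet, hbinet]
    have e1 : φ^(n+21) = φ^n * φ^21 := pow_add φ n 21
    have e2 : φ^(n+14) = φ^n * φ^14 := pow_add φ n 14
    have e3 : φ^(n+9) = φ^n * φ^9 := pow_add φ n 9
    have e4 : φ^(n+2) = φ^n * φ^2 := pow_add φ n 2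
    have f1 : ψ^(n+21) = ψ^n * ψ^21 := pow_add ψ n 21
    have f2 : ψ^(n+14) = ψ^n * ψ^14 := pow_add ψ n 14
    have f3 : ψ^(n+9) = ψ^n * ψ^9 := pow_add ψ n 9
    have f4 : ψ^(n+2) = ψ^n * ψ^2 := pow_add ψ n 2
    have hdp : (ψ/φ)^n = ψ^n / φ^n := div_pow ψ φ n
    have hd1 : (φ^19+φ^12+φ^7+1)/(Real.sqrt 5*φ^19)
        = (φ^n*(φ^21+φ^14+φ^9+φ^2))/(Real.sqrt 5*(φ^n*φ^21)) := by
      rw [div_eq_div_iff (by positivity) (by positivity)]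
      ring
    have hd2 : (ψ^21+ψ^14+ψ^9+ψ^2)/(Real.sqrt 5*φ^21) * (ψ^n/φ^n)
        = (ψ^n*(ψ^21+ψ^14+ψ^9+ψ^2))/(Real.sqrt 5*(φ^n*φ^21)) := by
      rw [div_mul_div_comm, div_eq_div_iff (by positivity) (by positivity)]
      ring
    rw [e1, e2, e3, e4, f1, f2, f3, f4, ← add_div, ← add_div,
      ← add_div, div_div, hCtot, hD, hdp, hd1, hd2, ← sub_div]
    congr 1
    ring
  have hvpow : Tendsto (fun n : ℕ => (((Hm (n+21) : ℕ) : ℝ) / φ^(n+21)) ^ lam) atTop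
      (𝓝 (Ctot ^ lam)) := hv.rpow_const (Or.inl (ne_of_gt hCpos))
  have hu : Tendsto (fun n : ℕ => (A (Hm (n+21)) : ℝ) / 2^(n+21)) atTop (𝓝 (45573/262144)) := by
    apply hu_lim.congr
    intro n
    rw [hHn n]
  have hCl : Ctot ^ lam ≠ 0 := ne_of_gt (Real.rpow_pos_of_pos hCpos lam)
  have hdiv := hu.div hvpow hCl
  -- limit value identification
  have hlimval : (45573/262144 : ℝ) / Ctot ^ lam =
      (45573 / 262144) * (Real.sqrt 5 / (1 + φ ^ (-7 : ℤ) + φ ^ (-12 : ℤ) + φ ^ (-19 : ℤ))) ^ lam := by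
    have hgne : φ ≠ 0 := by positivity
    have hsum : (0:ℝ) < φ^19 + φ^12 + φ^7 + 1 := by positivity
    have hz : (1 : ℝ) + φ ^ (-7 : ℤ) + φ ^ (-12 : ℤ) + φ ^ (-19 : ℤ)
        = (φ^19 + φ^12 + φ^7 + 1)/φ^19 := by
      rw [zpow_neg, zpow_neg, zpow_neg]
      rw [show ((7:ℤ) = ((7:ℕ):ℤ)) from rfl, show ((12:ℤ) = ((12:ℕ):ℤ)) from rfl,
        show ((19:ℤ) = ((19:ℕ):ℤ)) from rfl, zpow_natCast, zpow_natCast, zpow_natCast]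
      field_simp
    have hbase : Real.sqrt 5 / ((φ^19 + φ^12 + φ^7 + 1)/φ^19) = Ctot⁻¹ := by
      rw [hCtot, inv_div]
      field_simp
    rw [hz, hbase, Real.inv_rpow (le_of_lt hCpos), div_eq_mul_inv]
  rw [← hlimval]
  -- pointwise equality
  apply hdiv.congr
  intro n
  have hHpos : (0:ℝ) < ((Hm (n+21) : ℕ) : ℝ) := by
    rw [hHn n]
    push_cast
    have : 0 < Nat.fib (n+2) := Nat.fib_pos.mpr (by omega)
    positivity
  have hgM : (0:ℝ) < φ^(n+21) := by positivity
  have hsplit : ((Hm (n+21) : ℕ) : ℝ) = (((Hm (n+21) : ℕ) : ℝ) / φ^(n+21)) * φ^(n+21) := by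
    field_simp
  have hrw : (((Hm (n+21) : ℕ) : ℝ)) ^ lam
      = ((((Hm (n+21) : ℕ) : ℝ) / φ^(n+21)) ^ lam) * 2^(n+21) := by
    conv_lhs => rw [hsplit]
    rw [Real.mul_rpow (by positivity) (le_of_lt hgM), pow_rpow_base φ lam hg1 (by rw [hlam, hφg])]
  simp only [Pi.div_apply]
  rw [hrw, div_div, mul_comm]
end

section
/- Define B(H) = (log H)^{−1} · Σ_{1 ≤ n ≤ H} R(n)/n^λ for integers H ≥ 2. Then B(H) ≍ 1; that is, 0 < liminf_{H→∞} B(H) ≤ limsup_{H→∞} B(H) < ∞. -/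
open scoped BigOperators
open Filter Topology

section AuxFib
open scoped goldenRatio

noncomputable def lam0 : ℝ := Real.log 2 / Real.log Real.goldenRatio

lemma fib_le_gpow : ∀ m : ℕ, (Nat.fib (m+1) : ℝ) ≤ φ ^ m
  | 0 => by norm_num
  | 1 => by simpa using Real.one_lt_goldenRatio.le
  | (m+2) => by
      have h1 := fib_le_gpow m
      have h2 := fib_le_gpow (m+1)
      have hp : φ ^ (m+2) = φ^(m+1) + φ^m := by
        have := Real.goldenRatio_pow_sub_goldenRatio_pow m; linarith
      have : Nat.fib (m+3) = Nat.fib (m+1) + Nat.fib (m+2) := Nat.fib_add_two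
      rw [show m+2+1 = m+3 from rfl, this]
      push_cast
      have h2' : (Nat.fib (m+2) : ℝ) ≤ φ ^ (m+1) := by exact_mod_cast h2
      rw [hp]; linarith

lemma gpow_le_fib : ∀ m : ℕ, φ ^ m ≤ (Nat.fib (m+2) : ℝ)
  | 0 => by norm_num
  | 1 => by
      have : (Nat.fib 3 : ℝ) = 2 := by norm_num [Nat.fib]
      rw [pow_one, this]; exact Real.goldenRatio_lt_two.le
  | (m+2) => by
      have h1 := gpow_le_fib m
      have h2 := gpow_le_fib (m+1)
      have hp : φ ^ (m+2) = φ^(m+1) + φ^m := by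
        have := Real.goldenRatio_pow_sub_goldenRatio_pow m; linarith
      have : Nat.fib (m+4) = Nat.fib (m+2) + Nat.fib (m+3) := Nat.fib_add_two
      rw [show m+2+2 = m+4 from rfl, this]
      push_cast
      have h2' : (φ:ℝ) ^ (m+1) ≤ (Nat.fib (m+3) : ℝ) := by exact_mod_cast h2
      rw [hp]; linarith

lemma log_gold_pos : 0 < Real.log φ := Real.log_pos Real.one_lt_goldenRatio

lemma lam0_pos : 0 < lam0 := div_pos (Real.log_pos one_lt_two) log_gold_pos

lemma lam0_le_two : lam0 ≤ 2 := by
  rw [lam0, div_le_iff₀ log_gold_pos]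
  have : Real.log 2 ≤ Real.log (φ^2) := by
    apply Real.log_le_log two_pos
    rw [Real.goldenRatio_sq]; linarith [Real.one_lt_goldenRatio]
  rw [Real.log_pow] at this; push_cast at this; linarith

lemma gold_rpow_lam0 : φ ^ lam0 = 2 := by
  rw [Real.rpow_def_of_pos Real.goldenRatio_pos, lam0, mul_div_cancel₀ _ (ne_of_gt log_gold_pos)]
  exact Real.exp_log two_pos

lemma gpow_rpow_lam0 (m : ℕ) : ((φ ^ m : ℝ)) ^ lam0 = 2 ^ m := by
  rw [← Real.rpow_natCast φ m, ← Real.rpow_mul Real.goldenRatio_pos.le, mul_comm,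
    Real.rpow_mul Real.goldenRatio_pos.le, gold_rpow_lam0, Real.rpow_natCast]

open Classical in
noncomputable def fibSets (n : ℕ) : Finset (Finset ℕ) :=
  (Finset.Icc 1 n).powerset.filter
    (fun S => (∀ x ∈ S, IsFibNum x) ∧ ∑ x ∈ S, x = n)

lemma one_le_of_isFibNum {x : ℕ} (h : IsFibNum x) : 1 ≤ x := by
  obtain ⟨m, hm, rfl⟩ := h
  exact Nat.fib_pos.mpr hm

lemma mem_fibSets {n : ℕ} {S : Finset ℕ} :
    S ∈ fibSets n ↔ (∀ x ∈ S, IsFibNum x) ∧ ∑ x ∈ S, x = n := by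
  classical
  rw [fibSets, Finset.mem_filter, Finset.mem_powerset]
  constructor
  · rintro ⟨-, h⟩; exact h
  · rintro ⟨h1, h2⟩
    refine ⟨fun x hx => Finset.mem_Icc.mpr ⟨one_le_of_isFibNum (h1 x hx), ?_⟩, h1, h2⟩
    calc x = (fun y => y) x := rfl
    _ ≤ ∑ y ∈ S, y := Finset.single_le_sum (fun i _ => Nat.zero_le i) hx
    _ = n := h2

lemma R_eq_s18 (n : ℕ) : R n = (fibSets n).card := by
  rw [R, ← Nat.card_eq_finsetCard]
  exact Nat.card_congr (Equiv.subtypeEquivRight (fun S => mem_fibSets.symm))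

lemma fibSets_disjoint {n m : ℕ} (h : n ≠ m) : Disjoint (fibSets n) (fibSets m) := by
  rw [Finset.disjoint_left]
  intro S hn hm
  exact h ((mem_fibSets.mp hn).2.symm.trans (mem_fibSets.mp hm).2)

open Classical in
lemma card_fibVals_le {H k : ℕ} (hk : 2 ≤ k) (hH : H < Nat.fib (k+1)) :
    ((Finset.Icc 1 H).filter IsFibNum).card ≤ k - 1 := by
  have hsub : (Finset.Icc 1 H).filter IsFibNum ⊆ (Finset.Icc 2 k).image Nat.fib := by
    intro x hx
    rw [Finset.mem_filter, Finset.mem_Icc] at hx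
    obtain ⟨⟨hx1, hxH⟩, m, hm, rfl⟩ := hx
    have hm2 : Nat.fib (max 2 m) = Nat.fib m := by
      rcases le_or_gt 2 m with h | h
      · rw [max_eq_right h]
      · interval_cases m <;> simp [Nat.fib]
    refine Finset.mem_image.mpr ⟨max 2 m, Finset.mem_Icc.mpr ⟨le_max_left _ _, ?_⟩, hm2⟩
    by_contra hc
    push_neg at hc
    have : Nat.fib (k+1) ≤ Nat.fib (max 2 m) := Nat.fib_mono hc
    omega
  calc ((Finset.Icc 1 H).filter IsFibNum).card ≤ ((Finset.Icc 2 k).image Nat.fib).card :=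
        Finset.card_le_card hsub
    _ ≤ (Finset.Icc 2 k).card := Finset.card_image_le
    _ = k - 1 := by rw [Nat.card_Icc]; omega

open Classical in
lemma A_le {k H : ℕ} (hk : 2 ≤ k) (hH : H < Nat.fib (k+1)) : A H ≤ 2 ^ (k-1) := by
  have key : A H = ((Finset.range (H+1)).biUnion fibSets).card := by
    rw [A, Finset.card_biUnion]
    · exact Finset.sum_congr rfl (fun n _ => R_eq_s18 n)
    · intro n _ m _ h; exact fibSets_disjoint h
  rw [key]
  have hsub : (Finset.range (H+1)).biUnion fibSets ⊆
      ((Finset.Icc 1 H).filter IsFibNum).powerset := by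
    intro S hS
    rw [Finset.mem_biUnion] at hS
    obtain ⟨n, hn, hSn⟩ := hS
    rw [Finset.mem_range] at hn
    rw [Finset.mem_powerset]
    obtain ⟨h1, h2⟩ := mem_fibSets.mp hSn
    intro x hx
    rw [Finset.mem_filter, Finset.mem_Icc]
    have hfib := h1 x hx
    have hxn : x ≤ n := by
      calc x ≤ ∑ y ∈ S, y := Finset.single_le_sum (f := fun y => y) (fun i _ => Nat.zero_le i) hx
      _ = n := h2
    exact ⟨⟨one_le_of_isFibNum hfib, by omega⟩, hfib⟩
  calc ((Finset.range (H+1)).biUnion fibSets).card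
      ≤ ((Finset.Icc 1 H).filter IsFibNum).powerset.card := Finset.card_le_card hsub
    _ = 2 ^ ((Finset.Icc 1 H).filter IsFibNum).card := Finset.card_powerset _
    _ ≤ 2 ^ (k-1) := Nat.pow_le_pow_right (by norm_num) (card_fibVals_le hk hH)

lemma sum_fib_Icc {k : ℕ} (hk : 2 ≤ k) :
    (∑ m ∈ Finset.Icc 2 k, Nat.fib m) + 2 = Nat.fib (k+2) := by
  have h := Nat.fib_succ_eq_succ_sum (k+1)
  have hsplit : ∑ m ∈ Finset.range (k+1), Nat.fib m
      = (∑ m ∈ Finset.Ico 0 2, Nat.fib m) + ∑ m ∈ Finset.Ico 2 (k+1), Nat.fib m := by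
    rw [Finset.range_eq_Ico, ← Finset.sum_Ico_consecutive _ (Nat.zero_le 2) (by omega)]
  have h2 : ∑ m ∈ Finset.Ico 0 2, Nat.fib m = 1 := by decide
  have h3 : Finset.Ico 2 (k+1) = Finset.Icc 2 k := by rw [Finset.Ico_add_one_right_eq_Icc]
  rw [hsplit, h2, h3] at h
  have h' : Nat.fib (k+2) = 1 + (∑ m ∈ Finset.Icc 2 k, Nat.fib m) + 1 := h
  omega

open Classical in
lemma block_ge {k : ℕ} (hk : 5 ≤ k) :
    2 ^ (k-3) ≤ ∑ n ∈ Finset.Icc (Nat.fib k) (2 * Nat.fib k - 2), R n := by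
  set W : Finset ℕ := (Finset.Icc 2 (k-2)).image Nat.fib with hW
  have hinj : Set.InjOn Nat.fib (Finset.Icc 2 (k-2)) := by
    intro a ha b hb hab
    simp only [Finset.coe_Icc, Set.mem_Icc] at ha hb
    exact Nat.fib_strictMonoOn.injOn (Set.mem_Ici.mpr ha.1) (Set.mem_Ici.mpr hb.1) hab
  have hcardW : W.card = k - 3 := by
    rw [hW, Finset.card_image_of_injOn hinj, Nat.card_Icc]; omega
  have hsumW : W.sum (fun x => x) + 2 = Nat.fib k := by
    rw [hW, Finset.sum_image (fun a ha b hb => hinj (by exact_mod_cast ha) (by exact_mod_cast hb))]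
    have := sum_fib_Icc (k := k-2) (by omega)
    rwa [show k - 2 + 2 = k by omega] at this
  have hWlt : ∀ x ∈ W, x < Nat.fib k := by
    intro x hx
    rw [hW, Finset.mem_image] at hx
    obtain ⟨m, hm, rfl⟩ := hx
    rw [Finset.mem_Icc] at hm
    calc Nat.fib m ≤ Nat.fib (k-2) := Nat.fib_mono hm.2
      _ < Nat.fib k := by
        rw [Nat.fib_lt_fib (by omega)]; omega
  have hWfib : ∀ x ∈ W, IsFibNum x := by
    intro x hx
    rw [hW, Finset.mem_image] at hx
    obtain ⟨m, hm, rfl⟩ := hx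
    rw [Finset.mem_Icc] at hm
    exact ⟨m, by omega, rfl⟩
  set D : Finset (Finset ℕ) :=
    (Finset.Icc (Nat.fib k) (2 * Nat.fib k - 2)).biUnion fibSets with hD
  -- the injection
  have hmap : ∀ U ∈ W.powerset, insert (Nat.fib k) U ∈ D := by
    intro U hU
    rw [Finset.mem_powerset] at hU
    have hnotmem : Nat.fib k ∉ U := fun h => lt_irrefl _ (hWlt _ (hU h))
    have hsum : (insert (Nat.fib k) U).sum (fun x => x) = Nat.fib k + U.sum (fun x => x) :=
      Finset.sum_insert hnotmem
    have hUle : U.sum (fun x => x) ≤ W.sum (fun x => x) :=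
      Finset.sum_le_sum_of_subset hU
    rw [hD, Finset.mem_biUnion]
    refine ⟨(insert (Nat.fib k) U).sum (fun x => x), ?_, ?_⟩
    · rw [Finset.mem_Icc, hsum]
      constructor
      · omega
      · omega
    · rw [mem_fibSets]
      refine ⟨?_, rfl⟩
      intro x hx
      rcases Finset.mem_insert.mp hx with h | h
      · exact ⟨k, by omega, h.symm⟩
      · exact hWfib x (hU h)
  have hinj2 : Set.InjOn (insert (Nat.fib k)) (W.powerset : Set (Finset ℕ)) := by
    intro U hU V hV h
    simp only [Finset.coe_powerset, Set.mem_preimage, Set.mem_powerset_iff] at hU hV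
    have hU' : Nat.fib k ∉ U := fun hm => lt_irrefl _ (hWlt _ (by exact_mod_cast hU hm))
    have hV' : Nat.fib k ∉ V := fun hm => lt_irrefl _ (hWlt _ (by exact_mod_cast hV hm))
    rw [← Finset.erase_insert hU', ← Finset.erase_insert hV', h]
  have hcardD : D.card = ∑ n ∈ Finset.Icc (Nat.fib k) (2 * Nat.fib k - 2), R n := by
    rw [hD, Finset.card_biUnion (fun n _ m _ h => fibSets_disjoint h)]
    exact Finset.sum_congr rfl (fun n _ => (R_eq_s18 n).symm)
  calc 2 ^ (k-3) = W.powerset.card := by rw [Finset.card_powerset, hcardW]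
    _ = (W.powerset.image (insert (Nat.fib k))).card :=
        (Finset.card_image_of_injOn hinj2).symm
    _ ≤ D.card := Finset.card_le_card (by
        intro S hS
        rw [Finset.mem_image] at hS
        obtain ⟨U, hU, rfl⟩ := hS
        exact hmap U hU)
    _ = _ := hcardD

noncomputable def f0 (n : ℕ) : ℝ := (R n : ℝ) / (n : ℝ) ^ lam0

lemma f0_nonneg (n : ℕ) : 0 ≤ f0 n := by
  apply div_nonneg (Nat.cast_nonneg _)
  positivity

lemma rpow_ge_of_fib {j n : ℕ} (hn : Nat.fib (j+2) ≤ n) : (2:ℝ)^j ≤ (n:ℝ) ^ lam0 := by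
  have h1 : (φ:ℝ)^j ≤ (n:ℝ) := le_trans (gpow_le_fib j) (by exact_mod_cast hn)
  calc (2:ℝ)^j = ((φ:ℝ)^j) ^ lam0 := (gpow_rpow_lam0 j).symm
    _ ≤ (n:ℝ) ^ lam0 := Real.rpow_le_rpow (by positivity) h1 lam0_pos.le

lemma rpow_le_of_fib {j n : ℕ} (hj : 1 ≤ j) (hn : n ≤ 2 * Nat.fib (j+1)) :
    (n:ℝ) ^ lam0 ≤ (2:ℝ)^(j+2) := by
  have h1 : (n:ℝ) ≤ 2 * (φ:ℝ)^j := by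
    have := fib_le_gpow j
    have h2 : (n:ℝ) ≤ 2 * (Nat.fib (j+1) : ℝ) := by exact_mod_cast hn
    linarith
  calc (n:ℝ) ^ lam0 ≤ (2 * (φ:ℝ)^j) ^ lam0 :=
        Real.rpow_le_rpow (Nat.cast_nonneg _) h1 lam0_pos.le
    _ = (2:ℝ)^lam0 * ((φ:ℝ)^j)^lam0 := Real.mul_rpow (by norm_num) (by positivity)
    _ ≤ (2:ℝ)^(2:ℝ) * (2:ℝ)^j := by
        rw [gpow_rpow_lam0]
        exact mul_le_mul_of_nonneg_right
          (Real.rpow_le_rpow_of_exponent_le one_le_two lam0_le_two) (by positivity)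
    _ = (2:ℝ)^(j+2) := by
        rw [show (2:ℝ)^(2:ℝ) = 4 by
          rw [show (2:ℝ) = ((2:ℕ):ℝ) by norm_num, Real.rpow_natCast]; norm_num]
        ring

lemma S_upper : ∀ k : ℕ, ∑ n ∈ Finset.Ico 1 (Nat.fib (k+2)), f0 n ≤ 2 * k := by
  intro k
  induction k with
  | zero => simp [Nat.fib]
  | succ k ih =>
    have h1 : (1:ℕ) ≤ Nat.fib (k+2) := Nat.fib_pos.mpr (by omega)
    have h2 : Nat.fib (k+2) ≤ Nat.fib (k+3) := Nat.fib_mono (by omega)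
    rw [← Finset.sum_Ico_consecutive _ h1 h2]
    have hblock : ∑ n ∈ Finset.Ico (Nat.fib (k+2)) (Nat.fib (k+3)), f0 n ≤ 2 := by
      have hA : (A (Nat.fib (k+3) - 1) : ℝ) ≤ (2:ℝ)^(k+1) := by
        have := A_le (k := k+2) (H := Nat.fib (k+3) - 1) (by omega)
          (show Nat.fib (k+3) - 1 < Nat.fib (k+3) from by
            have : 0 < Nat.fib (k+3) := Nat.fib_pos.mpr (by omega); omega)
        calc (A (Nat.fib (k+3) - 1) : ℝ) ≤ ((2:ℕ)^(k+1) : ℝ) := by exact_mod_cast this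
          _ = (2:ℝ)^(k+1) := by push_cast; ring
      have hsumR : ∑ n ∈ Finset.Ico (Nat.fib (k+2)) (Nat.fib (k+3)), (R n : ℝ)
          ≤ (2:ℝ)^(k+1) := by
        have hsub : Finset.Ico (Nat.fib (k+2)) (Nat.fib (k+3))
            ⊆ Finset.range (Nat.fib (k+3) - 1 + 1) := by
          intro n hn
          rw [Finset.mem_Ico] at hn
          rw [Finset.mem_range]
          have : 0 < Nat.fib (k+3) := Nat.fib_pos.mpr (by omega)
          omega
        calc ∑ n ∈ Finset.Ico (Nat.fib (k+2)) (Nat.fib (k+3)), (R n : ℝ)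
            ≤ ∑ n ∈ Finset.range (Nat.fib (k+3) - 1 + 1), (R n : ℝ) :=
              Finset.sum_le_sum_of_subset_of_nonneg hsub
                (fun n _ _ => Nat.cast_nonneg _)
          _ = (A (Nat.fib (k+3) - 1) : ℝ) := by rw [A]; push_cast; ring
          _ ≤ (2:ℝ)^(k+1) := hA
      have hterm : ∀ n ∈ Finset.Ico (Nat.fib (k+2)) (Nat.fib (k+3)),
          f0 n ≤ (R n : ℝ) / (2:ℝ)^k := by
        intro n hn
        rw [Finset.mem_Ico] at hn
        exact div_le_div_of_nonneg_left (Nat.cast_nonneg _) (by positivity)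
          (rpow_ge_of_fib hn.1)
      calc ∑ n ∈ Finset.Ico (Nat.fib (k+2)) (Nat.fib (k+3)), f0 n
          ≤ ∑ n ∈ Finset.Ico (Nat.fib (k+2)) (Nat.fib (k+3)), (R n : ℝ) / (2:ℝ)^k :=
            Finset.sum_le_sum hterm
        _ = (∑ n ∈ Finset.Ico (Nat.fib (k+2)) (Nat.fib (k+3)), (R n : ℝ)) / (2:ℝ)^k := by
            rw [Finset.sum_div]
        _ ≤ (2:ℝ)^(k+1) / (2:ℝ)^k := by gcongr
        _ = 2 := by rw [pow_succ]; field_simp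
    push_cast
    linarith

lemma block_lower {k : ℕ} (hk : 5 ≤ k) :
    (1:ℝ)/16 ≤ ∑ n ∈ Finset.Icc (Nat.fib k) (2 * Nat.fib k - 2), f0 n := by
  have hfibpos : 0 < Nat.fib k := Nat.fib_pos.mpr (by omega)
  have hfib2 : 2 ≤ Nat.fib k := by
    calc 2 = Nat.fib 3 := by norm_num [Nat.fib]
    _ ≤ Nat.fib k := Nat.fib_mono (by omega)
  have hterm : ∀ n ∈ Finset.Icc (Nat.fib k) (2 * Nat.fib k - 2),
      (R n : ℝ) / (2:ℝ)^(k+1) ≤ f0 n := by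
    intro n hn
    rw [Finset.mem_Icc] at hn
    have hn0 : 0 < n := by omega
    have hfr : n ≤ 2 * Nat.fib (k - 1 + 1) := by
      rw [show k - 1 + 1 = k by omega]; omega
    have h := rpow_le_of_fib (j := k-1) (by omega) hfr
    rw [show k - 1 + 2 = k + 1 by omega] at h
    exact div_le_div_of_nonneg_left (Nat.cast_nonneg _)
      (Real.rpow_pos_of_pos (by exact_mod_cast hn0) _) h
  have hsumR : (2:ℝ)^(k-3) ≤ ∑ n ∈ Finset.Icc (Nat.fib k) (2 * Nat.fib k - 2), (R n : ℝ) := by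
    have := block_ge hk
    calc (2:ℝ)^(k-3) = ((2^(k-3) : ℕ) : ℝ) := by push_cast; ring
      _ ≤ _ := by exact_mod_cast this
  calc (1:ℝ)/16 = (2:ℝ)^(k-3) / (2:ℝ)^(k+1) := by
        rw [div_eq_div_iff (by norm_num) (by positivity),
          show k + 1 = (k-3) + 4 by omega, pow_add]
        ring
    _ ≤ (∑ n ∈ Finset.Icc (Nat.fib k) (2 * Nat.fib k - 2), (R n : ℝ)) / (2:ℝ)^(k+1) := by
        gcongr
    _ = ∑ n ∈ Finset.Icc (Nat.fib k) (2 * Nat.fib k - 2), (R n : ℝ) / (2:ℝ)^(k+1) := by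
        rw [Finset.sum_div]
    _ ≤ _ := Finset.sum_le_sum hterm

lemma S_lower : ∀ T : ℕ, ((T:ℝ) - 2)/16 ≤ ∑ n ∈ Finset.Icc 1 (2 * Nat.fib (2*T) - 2), f0 n := by
  intro T
  induction T with
  | zero =>
    have h0 : (0:ℝ) ≤ ∑ n ∈ Finset.Icc 1 (2 * Nat.fib (2*0) - 2), f0 n :=
      Finset.sum_nonneg (fun n _ => f0_nonneg n)
    refine le_trans ?_ h0
    norm_num
  | succ T ih =>
    rcases le_or_gt (T+1) 2 with h | h
    · have h0 : (0:ℝ) ≤ ∑ n ∈ Finset.Icc 1 (2 * Nat.fib (2*(T+1)) - 2), f0 n :=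
        Finset.sum_nonneg (fun n _ => f0_nonneg n)
      refine le_trans ?_ h0
      have h2 : ((T:ℝ)+1) ≤ 2 := by exact_mod_cast h
      push_cast
      linarith
    · have hT : 2 ≤ T := by omega
      have ha : 1 ≤ Nat.fib (2*T) := Nat.fib_pos.mpr (by omega)
      have hb : Nat.fib (2*T+2) = Nat.fib (2*T) + Nat.fib (2*T+1) := Nat.fib_add_two
      have hc : Nat.fib (2*T) ≤ Nat.fib (2*T+1) := Nat.fib_le_fib_succ
      have hgoal : Finset.Icc 1 (2 * Nat.fib (2*(T+1)) - 2)
          = Finset.Icc 1 (2 * Nat.fib (2*T+2) - 2) := by rw [show 2*(T+1) = 2*T+2 by ring]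
      rw [hgoal]
      have hdisj : Disjoint (Finset.Icc 1 (2 * Nat.fib (2*T) - 2))
          (Finset.Icc (Nat.fib (2*T+2)) (2 * Nat.fib (2*T+2) - 2)) := by
        rw [Finset.disjoint_left]
        intro n hn1 hn2
        rw [Finset.mem_Icc] at hn1 hn2
        omega
      have hsub : Finset.Icc 1 (2 * Nat.fib (2*T) - 2)
          ∪ Finset.Icc (Nat.fib (2*T+2)) (2 * Nat.fib (2*T+2) - 2)
          ⊆ Finset.Icc 1 (2 * Nat.fib (2*T+2) - 2) := by
        intro n hn
        rcases Finset.mem_union.mp hn with h' | h' <;> rw [Finset.mem_Icc] at h' ⊢ <;> omega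
      have hblock := block_lower (k := 2*T+2) (by omega)
      calc (((T+1 : ℕ) : ℝ) - 2)/16 = ((T:ℝ)-2)/16 + 1/16 := by push_cast; ring
        _ ≤ (∑ n ∈ Finset.Icc 1 (2 * Nat.fib (2*T) - 2), f0 n)
            + ∑ n ∈ Finset.Icc (Nat.fib (2*T+2)) (2 * Nat.fib (2*T+2) - 2), f0 n := by
            exact add_le_add ih hblock
        _ = ∑ n ∈ Finset.Icc 1 (2 * Nat.fib (2*T) - 2)
            ∪ Finset.Icc (Nat.fib (2*T+2)) (2 * Nat.fib (2*T+2) - 2), f0 n :=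
            (Finset.sum_union hdisj).symm
        _ ≤ ∑ n ∈ Finset.Icc 1 (2 * Nat.fib (2*T+2) - 2), f0 n :=
            Finset.sum_le_sum_of_subset_of_nonneg hsub (fun n _ _ => f0_nonneg n)

lemma le_fib_add_one : ∀ j : ℕ, j ≤ Nat.fib j + 1
  | 0 => by norm_num
  | 1 => by norm_num
  | 2 => by norm_num
  | (j+3) => by
      have h := le_fib_add_one (j+2)
      have h2 : Nat.fib (j+3) = Nat.fib (j+1) + Nat.fib (j+2) := Nat.fib_add_two
      have h3 : 0 < Nat.fib (j+1) := Nat.fib_pos.mpr (by omega)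
      omega

noncomputable def Cu : ℝ := 2/Real.log Real.goldenRatio + 2/Real.log 2

noncomputable def cl : ℝ := 1/(64*Real.log Real.goldenRatio)

lemma cl_pos : 0 < cl := by
  have := log_gold_pos
  rw [cl]; positivity

lemma exists_fib_window (H : ℕ) (hH : 2 ≤ H) :
    ∃ k, 2 ≤ k ∧ Nat.fib k ≤ H ∧ H < Nat.fib (k+1) := by
  classical
  set P : ℕ → Prop := fun j => Nat.fib j ≤ H with hP
  have hP2 : P 2 := by show Nat.fib 2 ≤ H; norm_num; omega
  have hk2 : 2 ≤ Nat.findGreatest P (H+2) := Nat.le_findGreatest (by omega) hP2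
  have hPk : Nat.fib (Nat.findGreatest P (H+2)) ≤ H :=
    Nat.findGreatest_spec (m := 2) (by omega) hP2
  have hkH : Nat.findGreatest P (H+2) ≤ H+1 := by
    have := le_fib_add_one (Nat.findGreatest P (H+2)); omega
  have hnot : ¬ P (Nat.findGreatest P (H+2) + 1) :=
    Nat.findGreatest_is_greatest (Nat.lt_succ_self _) (by omega)
  exact ⟨Nat.findGreatest P (H+2), hk2, hPk, not_le.mp hnot⟩

lemma exists_T_window (H : ℕ) (hH : 288 ≤ H) :
    ∃ T, 6 ≤ T ∧ 2 * Nat.fib (2*T) ≤ H ∧ H < 2 * Nat.fib (2*T+2) := by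
  classical
  set P : ℕ → Prop := fun t => 2 * Nat.fib (2*t) ≤ H with hP
  have hfib12 : Nat.fib 12 = 144 := by norm_num
  have hP6 : P 6 := by show 2 * Nat.fib (2*6) ≤ H; norm_num [hfib12]; omega
  have hT6 : 6 ≤ Nat.findGreatest P (H+2) := Nat.le_findGreatest (by omega) hP6
  have hPT : 2 * Nat.fib (2 * Nat.findGreatest P (H+2)) ≤ H :=
    Nat.findGreatest_spec (m := 6) (by omega) hP6
  have hTH : Nat.findGreatest P (H+2) ≤ H+1 := by
    have := le_fib_add_one (2 * Nat.findGreatest P (H+2)); omega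
  have hnot : ¬ P (Nat.findGreatest P (H+2) + 1) :=
    Nat.findGreatest_is_greatest (Nat.lt_succ_self _) (by omega)
  refine ⟨Nat.findGreatest P (H+2), hT6, hPT, ?_⟩
  have h2 : ¬ (2 * Nat.fib (2*(Nat.findGreatest P (H+2)+1)) ≤ H) := hnot
  rw [show 2*(Nat.findGreatest P (H+2)+1) = 2*Nat.findGreatest P (H+2)+2 by ring] at h2
  omega

lemma upper_bound (H : ℕ) (hH : 2 ≤ H) :
    (Real.log H)⁻¹ * ∑ n ∈ Finset.Icc 1 H, f0 n ≤ Cu := by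
  have hlog2 : (0:ℝ) < Real.log 2 := Real.log_pos one_lt_two
  have hlogH2 : Real.log 2 ≤ Real.log H :=
    Real.log_le_log two_pos (by exact_mod_cast hH)
  have hlogHpos : (0:ℝ) < Real.log H := lt_of_lt_of_le hlog2 hlogH2
  obtain ⟨k, hk2, hPk, hHk⟩ := exists_fib_window H hH
  -- sum bound
  have hSup := S_upper (k-1)
  rw [show k-1+2 = k+1 by omega] at hSup
  have hS : ∑ n ∈ Finset.Icc 1 H, f0 n ≤ 2*((k:ℝ)-1) := by
    have hsub : Finset.Icc 1 H ⊆ Finset.Ico 1 (Nat.fib (k+1)) := by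
      intro n hn; rw [Finset.mem_Icc] at hn; rw [Finset.mem_Ico]; omega
    calc ∑ n ∈ Finset.Icc 1 H, f0 n ≤ ∑ n ∈ Finset.Ico 1 (Nat.fib (k+1)), f0 n :=
          Finset.sum_le_sum_of_subset_of_nonneg hsub (fun n _ _ => f0_nonneg n)
      _ ≤ 2*((k:ℝ)-1) := by
          have hcast : (((k-1:ℕ)):ℝ) = (k:ℝ)-1 := by
            rw [Nat.cast_sub (by omega)]; norm_num
          rw [← hcast]; exact hSup
  -- log bound
  have hlogk : ((k:ℝ) - 2) * Real.log Real.goldenRatio ≤ Real.log H := by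
    have h1 : (φ:ℝ)^(k-2) ≤ (Nat.fib k : ℝ) := by
      have := gpow_le_fib (k-2)
      rwa [show k-2+2 = k by omega] at this
    have h2 : (φ:ℝ)^(k-2) ≤ (H:ℝ) := le_trans h1 (by exact_mod_cast hPk)
    have h3 : Real.log ((φ:ℝ)^(k-2)) ≤ Real.log H := Real.log_le_log (by positivity) h2
    rw [Real.log_pow] at h3
    have hcast : (((k-2:ℕ)):ℝ) = (k:ℝ)-2 := by
      rw [Nat.cast_sub (by omega)]; norm_num
    rwa [hcast] at h3
  have h1 : (k:ℝ)-2 ≤ Real.log H / Real.log Real.goldenRatio :=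
    (le_div_iff₀ log_gold_pos).mpr hlogk
  have h2 : (1:ℝ) ≤ Real.log H / Real.log 2 := (le_div_iff₀ hlog2).mpr (by linarith)
  have hCuH : 2*((k:ℝ)-1) ≤ Cu * Real.log H := by
    have hexp : Cu * Real.log H
        = 2*(Real.log H/Real.log Real.goldenRatio) + 2*(Real.log H/Real.log 2) := by
      rw [Cu]; ring
    rw [hexp]; linarith
  calc (Real.log H)⁻¹ * ∑ n ∈ Finset.Icc 1 H, f0 n
      = (∑ n ∈ Finset.Icc 1 H, f0 n) / Real.log H := by rw [inv_mul_eq_div]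
    _ ≤ Cu := by
        rw [div_le_iff₀ hlogHpos]
        calc ∑ n ∈ Finset.Icc 1 H, f0 n ≤ 2*((k:ℝ)-1) := hS
          _ ≤ Cu * Real.log H := hCuH

lemma lower_bound (H : ℕ) (hH : 288 ≤ H) :
    cl ≤ (Real.log H)⁻¹ * ∑ n ∈ Finset.Icc 1 H, f0 n := by
  have hlog2 : (0:ℝ) < Real.log 2 := Real.log_pos one_lt_two
  have hlogH2 : Real.log 2 ≤ Real.log H :=
    Real.log_le_log two_pos (by exact_mod_cast (by omega : 2 ≤ H))
  have hlogHpos : (0:ℝ) < Real.log H := lt_of_lt_of_le hlog2 hlogH2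
  obtain ⟨T, hT6, hPT, hHT⟩ := exists_T_window H hH
  -- sum lower bound
  have hS : ((T:ℝ)-2)/16 ≤ ∑ n ∈ Finset.Icc 1 H, f0 n := by
    have hsub : Finset.Icc 1 (2 * Nat.fib (2*T) - 2) ⊆ Finset.Icc 1 H := by
      intro n hn; rw [Finset.mem_Icc] at hn ⊢; omega
    calc ((T:ℝ)-2)/16 ≤ ∑ n ∈ Finset.Icc 1 (2 * Nat.fib (2*T) - 2), f0 n := S_lower T
      _ ≤ _ := Finset.sum_le_sum_of_subset_of_nonneg hsub (fun n _ _ => f0_nonneg n)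
  -- log upper bound
  have hlogup : Real.log H ≤ Real.log 2 + (2*(T:ℝ)+1) * Real.log Real.goldenRatio := by
    have h1 : (Nat.fib (2*T+2) : ℝ) ≤ (φ:ℝ)^(2*T+1) := fib_le_gpow (2*T+1)
    have h2 : (H:ℝ) ≤ 2 * (φ:ℝ)^(2*T+1) := by
      have : (H:ℝ) ≤ 2 * (Nat.fib (2*T+2) : ℝ) := by exact_mod_cast hHT.le
      linarith
    have h3 : Real.log H ≤ Real.log (2 * (φ:ℝ)^(2*T+1)) :=
      Real.log_le_log (by positivity) h2
    rwa [Real.log_mul (by norm_num) (by positivity), Real.log_pow, Nat.cast_add,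
      Nat.cast_mul, Nat.cast_ofNat, Nat.cast_one] at h3
  have hlog_phi3 : Real.log 2 ≤ 3 * Real.log Real.goldenRatio := by
    have hphi3 : (2:ℝ) ≤ (φ:ℝ)^3 := by nlinarith [Real.goldenRatio_sq, Real.one_lt_goldenRatio]
    have := Real.log_le_log two_pos hphi3
    rwa [Real.log_pow, Nat.cast_ofNat] at this
  have key : cl * Real.log H ≤ ((T:ℝ)-2)/16 := by
    rw [cl, div_mul_eq_mul_div, one_mul, div_le_div_iff₀ (mul_pos (by norm_num) log_gold_pos) (by norm_num)]
    have hTcast : (6:ℝ) ≤ (T:ℝ) := by exact_mod_cast hT6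
    nlinarith [hlogup, hlog_phi3, log_gold_pos, mul_le_mul_of_nonneg_right
      (show (3:ℝ) ≤ 2*(T:ℝ)-9 by linarith) log_gold_pos.le]
  rw [inv_mul_eq_div, le_div_iff₀ hlogHpos]
  linarith

end AuxFib

/-- The logarithmic average `B(H)` satisfies `0 < liminf B ≤ limsup B < ∞`. -/
theorem log_average_order_of_magnitude (φ lam : ℝ)
    (hφ : φ = (1 + Real.sqrt 5) / 2)
    (hlam : lam = Real.log 2 / Real.log φ)
    (B : ℕ → ℝ)
    (hB : ∀ H : ℕ, 2 ≤ H →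
      B H = (Real.log H)⁻¹ * ∑ n ∈ Finset.Icc 1 H, (R n : ℝ) / (n : ℝ) ^ lam) :
    0 < liminf (fun H : ℕ => (B H : EReal)) atTop ∧
    liminf (fun H : ℕ => (B H : EReal)) atTop ≤
      limsup (fun H : ℕ => (B H : EReal)) atTop ∧
    limsup (fun H : ℕ => (B H : EReal)) atTop < ⊤ := by
  have hlam0 : lam = lam0 := by rw [hlam, hφ, lam0]
  have hBeq : ∀ H : ℕ, 2 ≤ H →
      B H = (Real.log H)⁻¹ * ∑ n ∈ Finset.Icc 1 H, f0 n := by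
    intro H hH
    rw [hB H hH, hlam0]
    rfl
  have hub : ∀ᶠ H : ℕ in atTop, (B H : EReal) ≤ ((Cu : ℝ) : EReal) := by
    filter_upwards [eventually_ge_atTop 2] with H hH
    exact EReal.coe_le_coe_iff.mpr (by rw [hBeq H hH]; exact upper_bound H hH)
  have hlb : ∀ᶠ H : ℕ in atTop, ((cl : ℝ) : EReal) ≤ (B H : EReal) := by
    filter_upwards [eventually_ge_atTop 288] with H hH
    exact EReal.coe_le_coe_iff.mpr (by rw [hBeq H (by omega)]; exact lower_bound H hH)
  have h1 : ((cl : ℝ) : EReal) ≤ liminf (fun H : ℕ => (B H : EReal)) atTop := by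
    have := Filter.liminf_le_liminf (f := atTop) hlb
    rwa [Filter.liminf_const] at this
  have h2 : limsup (fun H : ℕ => (B H : EReal)) atTop ≤ ((Cu : ℝ) : EReal) := by
    have := Filter.limsup_le_limsup (f := atTop) hub
    rwa [Filter.limsup_const] at this
  refine ⟨lt_of_lt_of_le ?_ h1, Filter.liminf_le_limsup, lt_of_le_of_lt h2 (EReal.coe_lt_top Cu)⟩
  exact_mod_cast cl_pos
end
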